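/- arXiv:2405.05509 — 3 statements merged into one kernel-verified Lean document; each statement's English description precedes it below -/
import Mathlib

section
/- Let X and Y be real Banach spaces and S : X → Y a bounded linear operator. Then for every n ≥ 1, the n-th Gelfand number satisfies c_n(S) ≤ n · (∏_{k=1}^n h_k(S))^{1/n}, where h_k are the Hilbert numbers. -/
/-- The real Hilbert sequence space ℓ₂ = lp(ℕ, 2). -/
abbrev Ell2 : Type := lp (fun _ : ℕ => ℝ) 2

/-- Approximation numbers. -/
noncomputable def approxNumber {X Y : Type*} [NormedAddCommGroup X] [NormedSpace ℝ X]
    [NormedAddCommGroup Y] [NormedSpace ℝ Y] (n : ℕ) (S : X →L[ℝ] Y) : ℝ :=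
  sInf {r : ℝ | ∃ L : X →L[ℝ] Y, LinearMap.rank (L : X →ₗ[ℝ] Y) < n ∧ r = ‖S - L‖}

/-- Gelfand numbers. -/
noncomputable def gelfandNumber {X Y : Type*} [NormedAddCommGroup X] [NormedSpace ℝ X]
    [NormedAddCommGroup Y] [NormedSpace ℝ Y] (n : ℕ) (S : X →L[ℝ] Y) : ℝ :=
  sInf {r : ℝ | ∃ M : Submodule ℝ X, IsClosed (M : Set X) ∧ Module.rank ℝ (X ⧸ M) < n ∧
    r = ‖S.comp M.subtypeL‖}

/-- The canonical quotient map onto `Y ⧸ N`, as a continuous linear map (with respect to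
the quotient (semi)norm). -/
noncomputable def quotientCLM {Y : Type*} [NormedAddCommGroup Y] [NormedSpace ℝ Y]
    (N : Submodule ℝ Y) : Y →L[ℝ] Y ⧸ N :=
  LinearMap.mkContinuous N.mkQ 1 fun y => by
    simpa using Submodule.Quotient.norm_mk_le N y

/-- Kolmogorov numbers. -/
noncomputable def kolmogorovNumber {X Y : Type*} [NormedAddCommGroup X] [NormedSpace ℝ X]
    [NormedAddCommGroup Y] [NormedSpace ℝ Y] (n : ℕ) (S : X →L[ℝ] Y) : ℝ :=
  sInf {r : ℝ | ∃ N : Submodule ℝ Y, Module.rank ℝ N < n ∧ r = ‖(quotientCLM N).comp S‖}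

/-- Hilbert numbers. -/
noncomputable def hilbertNumber {X Y : Type*} [NormedAddCommGroup X] [NormedSpace ℝ X]
    [NormedAddCommGroup Y] [NormedSpace ℝ Y] (n : ℕ) (S : X →L[ℝ] Y) : ℝ :=
  sSup {r : ℝ | ∃ (A : Ell2 →L[ℝ] X) (B : Y →L[ℝ] Ell2), A ≠ 0 ∧ B ≠ 0 ∧
    r = approxNumber n (B.comp (S.comp A)) / (‖B‖ * ‖A‖)}


section ApproxBasics

variable {X Y Z W : Type*} [NormedAddCommGroup X] [NormedSpace ℝ X]
  [NormedAddCommGroup Y] [NormedSpace ℝ Y]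
  [NormedAddCommGroup Z] [NormedSpace ℝ Z] [NormedAddCommGroup W] [NormedSpace ℝ W]

lemma approxSet_bddBelow (n : ℕ) (S : X →L[ℝ] Y) :
    BddBelow {r : ℝ | ∃ L : X →L[ℝ] Y, LinearMap.rank (L : X →ₗ[ℝ] Y) < n ∧ r = ‖S - L‖} := by
  refine ⟨0, fun r hr => ?_⟩
  obtain ⟨L, _, rfl⟩ := hr
  positivity

lemma approxSet_nonempty {n : ℕ} (hn : 1 ≤ n) (S : X →L[ℝ] Y) :
    Set.Nonempty {r : ℝ | ∃ L : X →L[ℝ] Y, LinearMap.rank (L : X →ₗ[ℝ] Y) < n ∧ r = ‖S - L‖} := by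
  refine ⟨‖S - 0‖, 0, ?_, rfl⟩
  simp only [ContinuousLinearMap.coe_zero, LinearMap.rank_zero]
  exact_mod_cast Nat.pos_of_ne_zero (by omega)

lemma approxNumber_nonneg (n : ℕ) (S : X →L[ℝ] Y) : 0 ≤ approxNumber n S :=
  Real.sInf_nonneg (fun r hr => by obtain ⟨L, _, rfl⟩ := hr; positivity)

lemma approxNumber_le {n : ℕ} (S L : X →L[ℝ] Y)
    (hL : LinearMap.rank (L : X →ₗ[ℝ] Y) < n) : approxNumber n S ≤ ‖S - L‖ :=
  csInf_le (approxSet_bddBelow n S) ⟨L, hL, rfl⟩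

lemma approxNumber_le_norm {n : ℕ} (hn : 1 ≤ n) (S : X →L[ℝ] Y) : approxNumber n S ≤ ‖S‖ := by
  have := approxNumber_le (n := n) S 0 (by
    simp only [ContinuousLinearMap.coe_zero, LinearMap.rank_zero]
    exact_mod_cast Nat.pos_of_ne_zero (by omega))
  simpa using this

/-- `a_n(U V W) ≤ ‖U‖ a_n(V) ‖W‖` (universe-monomorphic version). -/
lemma approxNumber_comp_le {n : ℕ} (hn : 1 ≤ n)
    {X' Y' Z' W' : Type} [NormedAddCommGroup X'] [NormedSpace ℝ X']
    [NormedAddCommGroup Y'] [NormedSpace ℝ Y']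
    [NormedAddCommGroup Z'] [NormedSpace ℝ Z'] [NormedAddCommGroup W'] [NormedSpace ℝ W']
    (U : Z' →L[ℝ] W') (V : Y' →L[ℝ] Z') (Wm : X' →L[ℝ] Y') :
    approxNumber n (U.comp (V.comp Wm)) ≤ ‖U‖ * approxNumber n V * ‖Wm‖ := by
  have key : ∀ r ∈ {r : ℝ | ∃ L : Y' →L[ℝ] Z', LinearMap.rank (L : Y' →ₗ[ℝ] Z') < n ∧ r = ‖V - L‖},
      approxNumber n (U.comp (V.comp Wm)) ≤ ‖U‖ * r * ‖Wm‖ := by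
    rintro r ⟨L, hL, rfl⟩
    have hrank : LinearMap.rank ((U.comp (L.comp Wm)) : X' →ₗ[ℝ] W') < n := by
      have hcoe : ((U.comp (L.comp Wm)) : X' →ₗ[ℝ] W')
          = ((U : Z' →ₗ[ℝ] W') ∘ₗ (L : Y' →ₗ[ℝ] Z')) ∘ₗ (Wm : X' →ₗ[ℝ] Y') := rfl
      have h1 : LinearMap.rank ((U.comp (L.comp Wm)) : X' →ₗ[ℝ] W')
          ≤ LinearMap.rank ((U : Z' →ₗ[ℝ] W') ∘ₗ (L : Y' →ₗ[ℝ] Z')) := by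
        rw [hcoe]; exact LinearMap.rank_comp_le_left _ _
      have h2 := LinearMap.lift_rank_comp_le_right (L : Y' →ₗ[ℝ] Z') (U : Z' →ₗ[ℝ] W')
      simp only [Cardinal.lift_id] at h2
      exact lt_of_le_of_lt (le_trans h1 h2) hL
    calc approxNumber n (U.comp (V.comp Wm)) ≤ ‖U.comp (V.comp Wm) - U.comp (L.comp Wm)‖ :=
          approxNumber_le _ _ hrank
      _ = ‖(U.comp ((V - L).comp Wm))‖ := by
          congr 1
          ext x
          simp [ContinuousLinearMap.comp_apply, map_sub]
      _ ≤ ‖U‖ * ‖V - L‖ * ‖Wm‖ := by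
          refine le_trans (ContinuousLinearMap.opNorm_comp_le _ _) ?_
          have := ContinuousLinearMap.opNorm_comp_le (V - L) Wm
          have hU : (0:ℝ) ≤ ‖U‖ := norm_nonneg _
          nlinarith [norm_nonneg (V - L), norm_nonneg Wm]
  -- pass to the infimum
  rcases (approxSet_nonempty hn V) with ⟨r0, hr0⟩
  by_contra hcon
  push_neg at hcon
  have hUW : 0 ≤ ‖U‖ * ‖Wm‖ := by positivity
  rcases eq_or_lt_of_le hUW with h0 | hpos
  · have hk := key r0 hr0
    have hV := approxNumber_nonneg n V
    rcases mul_eq_zero.1 h0.symm with hU | hW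
    · rw [hU] at hk hcon; simp at hk hcon; linarith
    · rw [hW] at hk hcon; simp at hk hcon; linarith
  · set δ := (approxNumber n (U.comp (V.comp Wm)) - ‖U‖ * approxNumber n V * ‖Wm‖) / (‖U‖ * ‖Wm‖)
      with hδ
    have hδpos : 0 < δ := by
      apply div_pos _ hpos
      linarith
    obtain ⟨r, hr, hrlt⟩ := Real.lt_sInf_add_pos (approxSet_nonempty hn V) hδpos
    have h2 := key r hr
    have : ‖U‖ * r * ‖Wm‖ < ‖U‖ * (approxNumber n V + δ) * ‖Wm‖ := by
      have heq : ‖U‖ * r * ‖Wm‖ = (‖U‖ * ‖Wm‖) * r := by ring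
      rw [heq]
      have h3 : (‖U‖ * ‖Wm‖) * r < (‖U‖ * ‖Wm‖) * (approxNumber n V + δ) :=
        mul_lt_mul_of_pos_left hrlt hpos
      nlinarith
    have h4 : ‖U‖ * (approxNumber n V + δ) * ‖Wm‖
        = ‖U‖ * approxNumber n V * ‖Wm‖ + (‖U‖ * ‖Wm‖) * δ := by ring
    have h5 : (‖U‖ * ‖Wm‖) * δ = approxNumber n (U.comp (V.comp Wm)) - ‖U‖ * approxNumber n V * ‖Wm‖ := by
      rw [hδ, mul_div_assoc', mul_div_right_comm, div_self (ne_of_gt hpos), one_mul]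
    linarith

end ApproxBasics

open RealInnerProductSpace Module in
/-- Weyl's inequality: `|det T| ≤ ∏ a_{k+1}(T)` on Euclidean space. -/
lemma abs_det_le_prod_approxNumber (n : ℕ)
    (T : EuclideanSpace ℝ (Fin n) →L[ℝ] EuclideanSpace ℝ (Fin n)) :
    |LinearMap.det (T : EuclideanSpace ℝ (Fin n) →ₗ[ℝ] EuclideanSpace ℝ (Fin n))|
      ≤ ∏ k : Fin n, approxNumber (k + 1) T := by
  classical
  set E := EuclideanSpace ℝ (Fin n)
  set f : E →L[ℝ] E := (ContinuousLinearMap.adjoint T).comp T with hf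
  set fl : E →ₗ[ℝ] E := (f : E →ₗ[ℝ] E) with hfl
  have hsym : fl.IsSymmetric := by
    intro x y
    have h1 : ⟪fl x, y⟫ = ⟪T x, T y⟫ := ContinuousLinearMap.adjoint_inner_left T y (T x)
    have h2 : ⟪x, fl y⟫ = ⟪T x, T y⟫ := ContinuousLinearMap.adjoint_inner_right T x (T y)
    rw [h1, h2]
  have hrank : Module.finrank ℝ E = n := finrank_euclideanSpace_fin
  set b := hsym.eigenvectorBasis hrank with hb
  set μ := hsym.eigenvalues hrank with hμ
  have happly : ∀ i, fl (b i) = μ i • b i := fun i => hsym.apply_eigenvectorBasis hrank i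
  have hμnn : ∀ i, 0 ≤ μ i := by
    intro i
    have h1 : ⟪b i, fl (b i)⟫ = ⟪T (b i), T (b i)⟫ :=
      ContinuousLinearMap.adjoint_inner_right T (b i) (T (b i))
    have h2 : ⟪b i, fl (b i)⟫ = μ i := by
      rw [happly i, real_inner_smul_right, real_inner_self_eq_norm_sq, b.orthonormal.1 i]
      simp
    rw [h2] at h1
    rw [h1]
    exact real_inner_self_nonneg
  -- sort the eigenvalues decreasingly
  set σ : Equiv.Perm (Fin n) := Tuple.sort (fun i => -μ i) with hσ
  set ν : Fin n → ℝ := fun k => μ (σ k) with hν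
  have hanti : ∀ {j k : Fin n}, j ≤ k → ν k ≤ ν j := by
    intro j k hjk
    have := Tuple.monotone_sort (fun i => -μ i) hjk
    simpa [hν] using this
  have hνnn : ∀ k, 0 ≤ ν k := fun k => hμnn _
  -- determinant identities
  set detT := LinearMap.det (T : E →ₗ[ℝ] E) with hdetT
  have hdet_adj : LinearMap.det ((ContinuousLinearMap.adjoint T : E →L[ℝ] E) : E →ₗ[ℝ] E)
      = detT := by
    set M1 := LinearMap.toMatrix b.toBasis b.toBasis
      ((ContinuousLinearMap.adjoint T : E →L[ℝ] E) : E →ₗ[ℝ] E) with hM1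
    set M2 := LinearMap.toMatrix b.toBasis b.toBasis (T : E →ₗ[ℝ] E) with hM2
    have hM : M1 = M2.transpose := by
      ext i j
      rw [hM1, hM2]
      rw [LinearMap.toMatrix_apply, Matrix.transpose_apply, LinearMap.toMatrix_apply]
      rw [OrthonormalBasis.coe_toBasis_repr_apply, OrthonormalBasis.coe_toBasis_repr_apply,
        OrthonormalBasis.repr_apply_apply, OrthonormalBasis.repr_apply_apply]
      simp only [OrthonormalBasis.coe_toBasis, ContinuousLinearMap.coe_coe]
      rw [ContinuousLinearMap.adjoint_inner_right]
      exact real_inner_comm _ _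
    calc LinearMap.det ((ContinuousLinearMap.adjoint T : E →L[ℝ] E) : E →ₗ[ℝ] E)
        = M1.det := (LinearMap.det_toMatrix _ _).symm
      _ = M2.det := by rw [hM, Matrix.det_transpose]
      _ = LinearMap.det (T : E →ₗ[ℝ] E) := LinearMap.det_toMatrix _ _
      _ = detT := rfl
  have hdet_f : LinearMap.det fl = detT ^ 2 := by
    have hcomp : fl = ((ContinuousLinearMap.adjoint T : E →L[ℝ] E) : E →ₗ[ℝ] E)
        ∘ₗ (T : E →ₗ[ℝ] E) := rfl
    rw [hcomp, LinearMap.det_comp, hdet_adj]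
    ring
  have hdet_diag : LinearMap.det fl = ∏ i, μ i := by
    have hM : LinearMap.toMatrix b.toBasis b.toBasis fl = Matrix.diagonal μ := by
      ext i j
      rw [LinearMap.toMatrix_apply, Matrix.diagonal]
      rw [OrthonormalBasis.coe_toBasis, happly j, map_smul]
      have : b.toBasis.repr (b j) = Finsupp.single j 1 := by
        rw [← OrthonormalBasis.coe_toBasis, Basis.repr_self]
      rw [this]
      simp only [Finsupp.smul_single, smul_eq_mul, mul_one, Matrix.of_apply]
      rw [Finsupp.single_apply]
      by_cases h : i = j
      · subst h; simp
      · simp [h, Ne.symm h]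
    rw [← LinearMap.det_toMatrix b.toBasis, hM, Matrix.det_diagonal]
  have hprod_perm : ∏ i, μ i = ∏ k, ν k := (Equiv.prod_comp σ μ).symm
  -- |det T| = ∏ sqrt (ν k)
  have habs : |detT| = ∏ k, Real.sqrt (ν k) := by
    have h1 : (∏ k, Real.sqrt (ν k)) ^ 2 = ∏ k, ν k := by
      rw [← Finset.prod_pow]
      exact Finset.prod_congr rfl fun k _ => Real.sq_sqrt (hνnn k)
    have h2 : detT ^ 2 = (∏ k, Real.sqrt (ν k)) ^ 2 := by
      rw [h1, ← hprod_perm, ← hdet_diag, hdet_f]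
    have h3 : 0 ≤ ∏ k, Real.sqrt (ν k) := Finset.prod_nonneg fun k _ => Real.sqrt_nonneg _
    calc |detT| = Real.sqrt (detT ^ 2) := (Real.sqrt_sq_eq_abs detT).symm
      _ = Real.sqrt ((∏ k, Real.sqrt (ν k)) ^ 2) := by rw [h2]
      _ = ∏ k, Real.sqrt (ν k) := Real.sqrt_sq h3
  -- the key minimax estimate
  have hkey : ∀ k : Fin n, Real.sqrt (ν k) ≤ approxNumber (k + 1) T := by
    intro k
    refine le_csInf (approxSet_nonempty (by omega) T) ?_
    rintro r ⟨L, hL, rfl⟩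
    -- the rank of L is at most k
    set lcoe : E →ₗ[ℝ] E := (L : E →ₗ[ℝ] E) with hlcoe
    set K : Submodule ℝ E := LinearMap.ker lcoe with hK
    have hrangeL : Module.finrank ℝ (LinearMap.range lcoe) ≤ k := by
      have := hL
      rw [LinearMap.rank, ← Module.finrank_eq_rank] at this
      exact_mod_cast Nat.lt_succ_iff.mp (by exact_mod_cast this)
    have hkerL : Module.finrank ℝ (LinearMap.range lcoe) + Module.finrank ℝ K = n := by
      have hrn := LinearMap.finrank_range_add_finrank_ker lcoe
      rw [hrank] at hrn
      exact hrn
    -- the span of the top k+1 eigenvectors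
    have hcast : (k : ℕ) + 1 ≤ n := k.isLt
    set v : Fin ((k : ℕ) + 1) → E := fun j => b (σ (Fin.castLE hcast j)) with hv
    have hvon : Orthonormal ℝ v := b.orthonormal.comp _
      (σ.injective.comp (Fin.castLE_injective hcast))
    set Wk : Submodule ℝ E := Submodule.span ℝ (Set.range v) with hWk
    have hWkrank : Module.finrank ℝ Wk = (k : ℕ) + 1 := by
      rw [hWk, finrank_span_eq_card hvon.linearIndependent, Fintype.card_fin]
    -- find a nonzero vector in Wk ⊓ ker L
    have hinf : 0 < Module.finrank ℝ (Wk ⊓ K : Submodule ℝ E) := by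
      have hsum := Submodule.finrank_sup_add_finrank_inf_eq Wk K
      have hle : Module.finrank ℝ (Wk ⊔ K : Submodule ℝ E) ≤ n :=
        le_trans (Submodule.finrank_le _) (le_of_eq hrank)
      omega
    obtain ⟨⟨x, hxmem⟩, hxne⟩ := Module.finrank_pos_iff_exists_ne_zero.mp hinf
    have hxW : x ∈ Wk := hxmem.1
    have hxK : L x = 0 := by
      have : x ∈ K := hxmem.2
      rw [hK, LinearMap.mem_ker] at this
      exact this
    have hxne0 : x ≠ 0 := fun h => hxne (by simp [h])
    -- coefficients of x vanish off the top k+1 indices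
    have hcoef : ∀ i : Fin n, (∀ j : Fin ((k : ℕ) + 1), i ≠ σ (Fin.castLE hcast j)) →
        b.repr x i = 0 := by
      intro i hi
      have hx0 : x ∈ LinearMap.ker ((innerSL ℝ (b i)).toLinearMap) := by
        apply Submodule.span_le.mpr _ hxW
        rintro y ⟨j, rfl⟩
        simp only [SetLike.mem_coe, LinearMap.mem_ker, ContinuousLinearMap.coe_coe,
          innerSL_apply_apply]
        exact b.orthonormal.2 (fun h => hi j h)
      have : ⟪b i, x⟫ = 0 := hx0
      rw [OrthonormalBasis.repr_apply_apply]
      exact this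
    -- ‖T x‖² ≥ ν k ‖x‖²
    have hreprfl : ∀ i, b.repr (fl x) i = μ i * b.repr x i := by
      intro i
      rw [OrthonormalBasis.repr_apply_apply, OrthonormalBasis.repr_apply_apply]
      have h1 : ⟪b i, fl x⟫ = ⟪fl (b i), x⟫ := (hsym (b i) x).symm
      rw [h1, happly i, real_inner_smul_left]
    have hinner : ⟪x, fl x⟫ = ∑ i, μ i * (b.repr x i) ^ 2 := by
      have h0 : ⟪x, fl x⟫ = ⟪b.repr x, b.repr (fl x)⟫ :=
        (b.repr.inner_map_map x (fl x)).symm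
      rw [h0, PiLp.inner_apply]
      refine Finset.sum_congr rfl fun i _ => ?_
      rw [hreprfl i]
      simp [RCLike.inner_apply]
      ring
    have hnormx : ‖x‖ ^ 2 = ∑ i, (b.repr x i) ^ 2 := by
      have h0 : ⟪x, x⟫ = ⟪b.repr x, b.repr x⟫ := (b.repr.inner_map_map x x).symm
      rw [← real_inner_self_eq_norm_sq, h0, PiLp.inner_apply]
      refine Finset.sum_congr rfl fun i _ => ?_
      simp [RCLike.inner_apply]
    have hTx2 : ‖T x‖ ^ 2 = ⟪x, fl x⟫ := by
      rw [← real_inner_self_eq_norm_sq]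
      exact (ContinuousLinearMap.adjoint_inner_right T x (T x)).symm
    have hlower : ν k * ‖x‖ ^ 2 ≤ ‖T x‖ ^ 2 := by
      rw [hTx2, hinner, hnormx, Finset.mul_sum]
      refine Finset.sum_le_sum fun i _ => ?_
      by_cases hc : b.repr x i = 0
      · simp [hc]
      · have : ∃ j : Fin ((k : ℕ) + 1), i = σ (Fin.castLE hcast j) := by
          by_contra hcon
          push_neg at hcon
          exact hc (hcoef i hcon)
        obtain ⟨j, rfl⟩ := this
        have hj : Fin.castLE hcast j ≤ k := by
          have := j.isLt
          exact Fin.mk_le_mk.mpr (by omega)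
        have : ν k ≤ μ (σ (Fin.castLE hcast j)) := hanti hj
        nlinarith [sq_nonneg (b.repr x (σ (Fin.castLE hcast j)))]
    -- conclude
    have hxpos : 0 < ‖x‖ := norm_pos_iff.mpr hxne0
    have hTxLx : ‖T x‖ ≤ ‖T - L‖ * ‖x‖ := by
      have : (T - L) x = T x := by simp [hxK]
      calc ‖T x‖ = ‖(T - L) x‖ := by rw [this]
        _ ≤ ‖T - L‖ * ‖x‖ := ContinuousLinearMap.le_opNorm _ _
    have hsq : (Real.sqrt (ν k) * ‖x‖) ^ 2 ≤ (‖T x‖) ^ 2 := by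
      rw [mul_pow, Real.sq_sqrt (hνnn k)]
      exact hlower
    have h1 : Real.sqrt (ν k) * ‖x‖ ≤ ‖T x‖ :=
      le_of_pow_le_pow_left₀ (by norm_num) (norm_nonneg _) hsq
    have h2 : Real.sqrt (ν k) * ‖x‖ ≤ ‖T - L‖ * ‖x‖ := le_trans h1 hTxLx
    exact le_of_mul_le_mul_right (by linarith [h2]) hxpos
  rw [habs]
  exact Finset.prod_le_prod (fun k _ => Real.sqrt_nonneg _) (fun k _ => hkey k)

namespace PietschAux

variable {n : ℕ}

/-- Extension by zero, as a function. -/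
noncomputable def extFun (n : ℕ) (x : EuclideanSpace ℝ (Fin n)) : ∀ _ : ℕ, ℝ :=
  fun i => if h : i < n then x ⟨i, h⟩ else 0

lemma extFun_memℓp (x : EuclideanSpace ℝ (Fin n)) : Memℓp (extFun n x) 2 := by
  apply memℓp_gen
  apply summable_of_ne_finset_zero (s := Finset.range n)
  intro i hi
  simp only [Finset.mem_range, not_lt] at hi
  have h0 : extFun n x i = 0 := dif_neg (by omega)
  simp [h0]

lemma tsum_extFun (g : EuclideanSpace ℝ (Fin n)) :
    (∑' i : ℕ, ‖extFun n g i‖ ^ (2:ℝ)) = ∑ i ∈ Finset.range n, ‖extFun n g i‖ ^ (2:ℝ) := by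
  apply tsum_eq_sum
  intro i hi
  simp only [Finset.mem_range, not_lt] at hi
  have h0 : extFun n g i = 0 := dif_neg (by omega)
  rw [h0, norm_zero]
  exact Real.zero_rpow (by norm_num)

lemma sum_extFun (g : EuclideanSpace ℝ (Fin n)) :
    ∑ i ∈ Finset.range n, ‖extFun n g i‖ ^ (2:ℝ) = ∑ j : Fin n, ‖g j‖ ^ (2:ℕ) := by
  rw [← Fin.sum_univ_eq_sum_range (fun i => ‖extFun n g i‖ ^ (2:ℝ)) n]
  refine Finset.sum_congr rfl fun j _ => ?_
  have hj : (j:ℕ) < n := j.isLt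
  have h1 : extFun n g (j:ℕ) = g j := by simp [extFun, hj]
  rw [h1, ← Real.rpow_natCast ‖g j‖ 2]
  norm_num

lemma norm_ext (x : EuclideanSpace ℝ (Fin n)) :
    ‖(⟨extFun n x, extFun_memℓp x⟩ : Ell2)‖ = ‖x‖ := by
  have h2 : (0:ℝ) < (2 : ENNReal).toReal := by norm_num
  rw [lp.norm_eq_tsum_rpow h2]
  have hco : ∀ i : ℕ, ((⟨extFun n x, extFun_memℓp x⟩ : Ell2) : ∀ _ : ℕ, ℝ) i = extFun n x i :=
    fun i => rfl
  have htr : (2 : ENNReal).toReal = (2:ℝ) := by norm_num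
  simp only [hco, htr]
  rw [tsum_extFun x, sum_extFun x, EuclideanSpace.norm_eq, Real.sqrt_eq_rpow]

noncomputable def extLi (n : ℕ) : EuclideanSpace ℝ (Fin n) →ₗᵢ[ℝ] Ell2 where
  toFun := fun x => ⟨extFun n x, extFun_memℓp x⟩
  map_add' := by
    intro x y
    apply Subtype.ext
    funext i
    show extFun n (x + y) i = extFun n x i + extFun n y i
    simp only [extFun]
    by_cases h : i < n <;> simp [h]
  map_smul' := by
    intro c x
    apply Subtype.ext
    funext i
    show extFun n (c • x) i = c * extFun n x i
    simp only [extFun]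
    by_cases h : i < n <;> simp [h]
  norm_map' := fun x => norm_ext x

/-- Coordinate projection `ℓ₂ → ℝⁿ`. -/
noncomputable def projLin (n : ℕ) : Ell2 →ₗ[ℝ] EuclideanSpace ℝ (Fin n) where
  toFun := fun f => (WithLp.toLp 2 (fun j => f (j:ℕ)) : EuclideanSpace ℝ (Fin n))
  map_add' := by intro f g; rfl
  map_smul' := by intro c f; rfl

lemma projLin_bound (f : Ell2) : ‖projLin n f‖ ≤ 1 * ‖f‖ := by
  rw [one_mul, EuclideanSpace.norm_eq]
  have h2 : (0:ℝ) < (2 : ENNReal).toReal := by norm_num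
  have hle := lp.sum_rpow_le_norm_rpow h2 f (Finset.range n)
  have htr : (2 : ENNReal).toReal = (2:ℝ) := by norm_num
  rw [htr] at hle
  have hsum : ∑ j : Fin n, ‖(projLin n f) j‖ ^ (2:ℕ) = ∑ i ∈ Finset.range n, ‖f i‖ ^ (2:ℝ) := by
    rw [← Fin.sum_univ_eq_sum_range (fun i => ‖f i‖ ^ (2:ℝ)) n]
    refine Finset.sum_congr rfl fun j _ => ?_
    rw [← Real.rpow_natCast ‖(projLin n f) j‖ 2]
    norm_num
    rfl
  rw [hsum]
  calc Real.sqrt (∑ i ∈ Finset.range n, ‖f i‖ ^ (2:ℝ)) ≤ Real.sqrt (‖f‖ ^ (2:ℝ)) :=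
        Real.sqrt_le_sqrt hle
    _ = ‖f‖ := by
        have : ‖f‖ ^ (2:ℝ) = ‖f‖ ^ (2:ℕ) := by
          rw [← Real.rpow_natCast ‖f‖ 2]; norm_num
        rw [this, Real.sqrt_sq (norm_nonneg f)]

noncomputable def projCLM (n : ℕ) : Ell2 →L[ℝ] EuclideanSpace ℝ (Fin n) :=
  (projLin n).mkContinuous 1 projLin_bound

lemma norm_projCLM_le : ‖projCLM n‖ ≤ 1 :=
  LinearMap.mkContinuous_norm_le _ (by norm_num) _

lemma proj_ext (x : EuclideanSpace ℝ (Fin n)) : projCLM n ((extLi n) x) = x := by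
  ext j
  have : projCLM n ((extLi n) x) j = extFun n x (j : ℕ) := rfl
  rw [this]
  simp [extFun, j.isLt]


universe u


variable {X Y : Type*} [NormedAddCommGroup X] [NormedSpace ℝ X]
  [NormedAddCommGroup Y] [NormedSpace ℝ Y]

lemma gelfandSet_bddBelow (n : ℕ) (S : X →L[ℝ] Y) :
    BddBelow {r : ℝ | ∃ M : Submodule ℝ X, IsClosed (M : Set X) ∧ Module.rank ℝ (X ⧸ M) < n ∧
      r = ‖S.comp M.subtypeL‖} := by
  refine ⟨0, fun r hr => ?_⟩
  obtain ⟨M, _, _, rfl⟩ := hr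
  positivity

lemma gelfandNumber_le {n : ℕ} (S : X →L[ℝ] Y) (M : Submodule ℝ X)
    (hclosed : IsClosed (M : Set X)) (hrank : Module.rank ℝ (X ⧸ M) < n) :
    gelfandNumber n S ≤ ‖S.comp M.subtypeL‖ :=
  csInf_le (gelfandSet_bddBelow n S) ⟨M, hclosed, hrank, rfl⟩

/-- From a norm bound, extract an almost-norming vector in a submodule. -/
lemma exists_almost_norming (S : X →L[ℝ] Y) (M : Submodule ℝ X) {c ε : ℝ} (hε : 0 < ε)
    (hc : c ≤ ‖S.comp M.subtypeL‖) :
    ∃ x : X, x ∈ M ∧ ‖x‖ ≤ 1 ∧ c - ε ≤ ‖S x‖ := by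
  by_contra hcon
  push_neg at hcon
  rcases lt_or_ge (c - ε) 0 with hneg | hnonneg
  · have h0 := hcon 0 (zero_mem M) (by simp)
    rw [map_zero, norm_zero] at h0
    linarith
  · have hbound : ‖S.comp M.subtypeL‖ ≤ c - ε := by
      apply ContinuousLinearMap.opNorm_le_bound _ hnonneg
      intro z
      by_cases hz : (z : X) = 0
      · have : ‖(z : X)‖ = 0 := by rw [hz, norm_zero]
        have hz' : ‖z‖ = 0 := this
        rw [ContinuousLinearMap.comp_apply]
        have : S (M.subtypeL z) = 0 := by
          simp only [Submodule.subtypeL_apply, hz, map_zero]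
        rw [this, norm_zero, hz', mul_zero]
      · have hznorm : 0 < ‖(z : X)‖ := norm_pos_iff.mpr hz
        set y : X := ‖(z : X)‖⁻¹ • (z : X) with hy
        have hymem : y ∈ M := M.smul_mem _ z.2
        have hynorm : ‖y‖ ≤ 1 := by
          rw [hy, norm_smul, norm_inv, norm_norm]
          rw [inv_mul_cancel₀ (ne_of_gt hznorm)]
        have hSy := hcon y hymem hynorm
        have hSz : ‖S (z : X)‖ = ‖(z : X)‖ * ‖S y‖ := by
          rw [hy, map_smul, norm_smul, norm_inv, norm_norm]
          field_simp
        rw [ContinuousLinearMap.comp_apply]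
        simp only [Submodule.subtypeL_apply]
        have hnz : ‖z‖ = ‖(z : X)‖ := rfl
        rw [hnz, hSz]
        have : ‖S y‖ ≤ c - ε := le_of_lt hSy
        nlinarith
    linarith

/-- The codimension of a finite intersection of kernels of functionals is small. -/
lemma rank_quotient_iInf_ker_lt {X' : Type u} [NormedAddCommGroup X'] [NormedSpace ℝ X']
    {m n : ℕ} (hmn : m < n) (g : Fin m → (X' →L[ℝ] ℝ)) :
    Module.rank ℝ (X' ⧸ (⨅ i : Fin m, LinearMap.ker (g i : X' →ₗ[ℝ] ℝ))) < n := by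
  set φ : X' →ₗ[ℝ] (Fin m → ℝ) := LinearMap.pi (fun i => (g i : X' →ₗ[ℝ] ℝ)) with hφ
  have hkk : ∀ i : Fin m, LinearMap.ker ((g i : X' →ₗ[ℝ] ℝ)) = LinearMap.ker (g i : X' →ₗ[ℝ] ℝ) :=
    fun i => rfl
  have hker : LinearMap.ker φ = ⨅ i : Fin m, LinearMap.ker (g i : X' →ₗ[ℝ] ℝ) := by
    rw [LinearMap.ker_pi]
  rw [← hker]
  have hequiv := φ.quotKerEquivRange
  have hlift := LinearEquiv.lift_rank_eq hequiv
  have hrange : Module.rank ℝ (LinearMap.range φ) ≤ m := by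
    refine le_trans (Submodule.rank_le _) ?_
    rw [rank_fun']
    simp
  have h1 : Cardinal.lift.{0, u} (Module.rank ℝ (X' ⧸ LinearMap.ker φ)) < (n : Cardinal) := by
    rw [hlift]
    calc Cardinal.lift.{u, 0} (Module.rank ℝ (LinearMap.range φ))
        ≤ Cardinal.lift.{u, 0} (m : Cardinal) := Cardinal.lift_le.mpr hrange
      _ = (m : Cardinal) := Cardinal.lift_natCast m
      _ < (n : Cardinal) := by exact_mod_cast hmn
  refine (Cardinal.lift_lt.{u, 0}).mp ?_
  rw [Cardinal.lift_natCast]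
  exact h1

/-- Construction of the almost-norming system for the Gelfand numbers. -/
lemma exists_gelfand_system [CompleteSpace Y] (S : X →L[ℝ] Y) {n : ℕ} {ε : ℝ} (hε : 0 < ε)
    (hpos : 0 < gelfandNumber n S - ε) (m : ℕ) (hm : m ≤ n) :
    ∃ (x : Fin m → X) (b : Fin m → (Y →L[ℝ] ℝ)),
      (∀ j, ‖x j‖ ≤ 1) ∧ (∀ j, ‖b j‖ ≤ 1) ∧
      (∀ j, b j (S (x j)) = ‖S (x j)‖) ∧
      (∀ j, gelfandNumber n S - ε ≤ ‖S (x j)‖) ∧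
      (∀ i j : Fin m, i < j → b i (S (x j)) = 0) := by
  induction m with
  | zero =>
    exact ⟨Fin.elim0, Fin.elim0, fun j => j.elim0, fun j => j.elim0, fun j => j.elim0,
      fun j => j.elim0, fun i j _ => j.elim0⟩
  | succ m ih =>
    obtain ⟨x, b, hx1, hb1, hbx, hlow, htri⟩ := ih (by omega)
    set c := gelfandNumber n S with hc
    set M : Submodule ℝ X := ⨅ i : Fin m, LinearMap.ker (((b i).comp S : X →L[ℝ] ℝ) : X →ₗ[ℝ] ℝ)
      with hM
    have hclosed : IsClosed (M : Set X) := by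
      rw [hM]
      have hcoe : ((⨅ i : Fin m, LinearMap.ker (((b i).comp S : X →L[ℝ] ℝ) : X →ₗ[ℝ] ℝ) : Submodule ℝ X) : Set X)
          = ⋂ i : Fin m, (LinearMap.ker (((b i).comp S : X →L[ℝ] ℝ) : X →ₗ[ℝ] ℝ) : Set X) := by
        rw [Submodule.coe_iInf]
      rw [hcoe]
      exact isClosed_iInter fun i => ContinuousLinearMap.isClosed_ker _
    have hrank : Module.rank ℝ (X ⧸ M) < n :=
      rank_quotient_iInf_ker_lt (by omega) (fun i => (b i).comp S)
    have hle : c ≤ ‖S.comp M.subtypeL‖ := gelfandNumber_le S M hclosed hrank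
    obtain ⟨xnew, hxmem, hxnorm, hxlow⟩ := exists_almost_norming S M hε hle
    have hSx : S xnew ≠ 0 := by
      intro h0
      rw [h0, norm_zero] at hxlow
      linarith
    obtain ⟨bnew, hbnorm, hbval⟩ := exists_dual_vector ℝ (S xnew) (norm_ne_zero_iff.mpr hSx)
    have hzero : ∀ i : Fin m, b i (S xnew) = 0 := by
      intro i
      have hmem : xnew ∈ LinearMap.ker (((b i).comp S : X →L[ℝ] ℝ) : X →ₗ[ℝ] ℝ) := by
        rw [hM] at hxmem
        exact (Submodule.mem_iInf _).mp hxmem i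
      simpa using hmem
    refine ⟨Fin.snoc x xnew, Fin.snoc b bnew, ?_, ?_, ?_, ?_, ?_⟩
    · intro j
      refine Fin.lastCases ?_ (fun j0 => ?_) j
      · rw [Fin.snoc_last]; exact hxnorm
      · rw [Fin.snoc_castSucc]; exact hx1 j0
    · intro j
      refine Fin.lastCases ?_ (fun j0 => ?_) j
      · rw [Fin.snoc_last, hbnorm]
      · rw [Fin.snoc_castSucc]; exact hb1 j0
    · intro j
      refine Fin.lastCases ?_ (fun j0 => ?_) j
      · rw [Fin.snoc_last, Fin.snoc_last, hbval]; norm_cast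
      · rw [Fin.snoc_castSucc, Fin.snoc_castSucc]; exact hbx j0
    · intro j
      refine Fin.lastCases ?_ (fun j0 => ?_) j
      · rw [Fin.snoc_last]; exact hxlow
      · rw [Fin.snoc_castSucc]; exact hlow j0
    · intro i j hij
      refine Fin.lastCases (motive := fun j => i < j → (Fin.snoc b bnew : Fin (m+1) → _) i
        ((S ((Fin.snoc x xnew : Fin (m+1) → X) j))) = 0) ?_ (fun j0 => ?_) j hij
      · intro hi
        have hine : i ≠ Fin.last m := ne_of_lt hi
        obtain ⟨i0, rfl⟩ := Fin.exists_castSucc_eq.mpr hine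
        rw [Fin.snoc_last, Fin.snoc_castSucc]
        exact hzero i0
      · intro hi
        have hine : i ≠ Fin.last m := by
          intro h
          rw [h] at hi
          exact absurd (le_of_lt hi) (not_le.mpr (Fin.castSucc_lt_last j0))
        obtain ⟨i0, rfl⟩ := Fin.exists_castSucc_eq.mpr hine
        rw [Fin.snoc_castSucc, Fin.snoc_castSucc]
        exact htri i0 j0 (by exact_mod_cast hi)


end PietschAux

section HilbertBasics

variable {X Y : Type*} [NormedAddCommGroup X] [NormedSpace ℝ X]
  [NormedAddCommGroup Y] [NormedSpace ℝ Y]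

lemma hilbertNumber_nonneg (k : ℕ) (S : X →L[ℝ] Y) : 0 ≤ hilbertNumber k S := by
  apply Real.sSup_nonneg
  rintro r ⟨A, B, hA, hB, rfl⟩
  have h1 := approxNumber_nonneg k (B.comp (S.comp A))
  positivity

lemma norm_pos_of_ne_zero {A : X →L[ℝ] Y} (hA : A ≠ 0) : 0 < ‖A‖ := by
  refine lt_of_le_of_ne (norm_nonneg A) fun h => hA ?_
  rw [← ContinuousLinearMap.opNorm_zero_iff]
  exact h.symm

lemma hilbertSet_bddAbove {k : ℕ} (hk : 1 ≤ k) (S : X →L[ℝ] Y) :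
    BddAbove {r : ℝ | ∃ (A : Ell2 →L[ℝ] X) (B : Y →L[ℝ] Ell2), A ≠ 0 ∧ B ≠ 0 ∧
      r = approxNumber k (B.comp (S.comp A)) / (‖B‖ * ‖A‖)} := by
  refine ⟨‖S‖, ?_⟩
  rintro r ⟨A, B, hA, hB, rfl⟩
  have hApos : 0 < ‖A‖ := norm_pos_of_ne_zero hA
  have hBpos : 0 < ‖B‖ := norm_pos_of_ne_zero hB
  have h1 : approxNumber k (B.comp (S.comp A)) ≤ ‖B‖ * ‖S‖ * ‖A‖ := by
    refine le_trans (approxNumber_le_norm hk _) ?_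
    refine le_trans (ContinuousLinearMap.opNorm_comp_le _ _) ?_
    have h2 := ContinuousLinearMap.opNorm_comp_le S A
    nlinarith [norm_nonneg B, norm_nonneg S, norm_nonneg A]
  rw [div_le_iff₀ (by positivity)]
  nlinarith
lemma approx_le_hilbert_mul {k : ℕ} (hk : 1 ≤ k) (S : X →L[ℝ] Y)
    (A : Ell2 →L[ℝ] X) (B : Y →L[ℝ] Ell2) (hA : A ≠ 0) (hB : B ≠ 0) :
    approxNumber k (B.comp (S.comp A)) ≤ hilbertNumber k S * (‖B‖ * ‖A‖) := by
  have hApos : 0 < ‖A‖ := norm_pos_of_ne_zero hA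
  have hBpos : 0 < ‖B‖ := norm_pos_of_ne_zero hB
  have hmem : approxNumber k (B.comp (S.comp A)) / (‖B‖ * ‖A‖) ∈
      {r : ℝ | ∃ (A : Ell2 →L[ℝ] X) (B : Y →L[ℝ] Ell2), A ≠ 0 ∧ B ≠ 0 ∧
        r = approxNumber k (B.comp (S.comp A)) / (‖B‖ * ‖A‖)} := ⟨A, B, hA, hB, rfl⟩
  have hle := le_csSup (hilbertSet_bddAbove hk S) hmem
  rw [hilbertNumber] at *
  rw [div_le_iff₀ (by positivity)] at hle
  linarith

end HilbertBasics

theorem gelfand_le_n_mul_geom_mean_hilbert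
    {X Y : Type*} [NormedAddCommGroup X] [NormedSpace ℝ X] [CompleteSpace X]
    [NormedAddCommGroup Y] [NormedSpace ℝ Y] [CompleteSpace Y]
    (S : X →L[ℝ] Y) (n : ℕ) (hn : 1 ≤ n) :
    gelfandNumber n S ≤
      (n : ℝ) * (∏ k ∈ Finset.Icc 1 n, hilbertNumber k S) ^ ((1 : ℝ) / n) := by
  classical
  set c := gelfandNumber n S with hcdef
  set P := ∏ k ∈ Finset.Icc 1 n, hilbertNumber k S with hPdef
  have hhnn : ∀ k, 0 ≤ hilbertNumber k S := fun k => hilbertNumber_nonneg k S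
  have hPnn : 0 ≤ P := Finset.prod_nonneg fun k _ => hhnn k
  set R := (n : ℝ) * P ^ ((1:ℝ)/n) with hRdef
  have hRnn : 0 ≤ R := mul_nonneg (Nat.cast_nonneg n) (Real.rpow_nonneg hPnn _)
  by_contra hcon
  push_neg at hcon
  set ε := (c - R)/2 with hεdef
  have hε : 0 < ε := by rw [hεdef]; linarith
  have hpos : 0 < c - ε := by rw [hεdef]; linarith
  have hRlt : R < c - ε := by rw [hεdef]; linarith
  obtain ⟨x, b, hx1, hb1, hbx, hlow, htri⟩ := PietschAux.exists_gelfand_system S hε hpos n le_rfl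
  -- the operator Eⁿ → X
  obtain ⟨A', hA'def⟩ : ∃ Z : EuclideanSpace ℝ (Fin n) →L[ℝ] X,
      Z = ∑ j : Fin n, (EuclideanSpace.proj j).smulRight (x j) := ⟨_, rfl⟩
  have hA'apply : ∀ v : EuclideanSpace ℝ (Fin n), A' v = ∑ j : Fin n, v j • x j := by
    intro v
    rw [hA'def, ContinuousLinearMap.sum_apply]
    exact Finset.sum_congr rfl fun j _ => by
      simp [ContinuousLinearMap.smulRight_apply, PiLp.proj_apply]
  -- Cauchy–Schwarz bound
  have hCS : ∀ v : EuclideanSpace ℝ (Fin n), (∑ j : Fin n, |v j|) ≤ Real.sqrt n * ‖v‖ := by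
    intro v
    set u : EuclideanSpace ℝ (Fin n) := WithLp.toLp 2 (fun j => |v j|) with hu
    set w : EuclideanSpace ℝ (Fin n) := WithLp.toLp 2 (fun _ => (1:ℝ)) with hw
    have hinner : (inner ℝ w u : ℝ) = ∑ j : Fin n, |v j| := by
      rw [PiLp.inner_apply]
      exact Finset.sum_congr rfl fun j _ => by
        simp [hu, hw, RCLike.inner_apply]
    have hnu : ‖u‖ = ‖v‖ := by
      rw [EuclideanSpace.norm_eq, EuclideanSpace.norm_eq]
      congr 1
      exact Finset.sum_congr rfl fun j _ => by simp [hu, Real.norm_eq_abs, abs_abs]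
    have hnw : ‖w‖ = Real.sqrt n := by
      rw [EuclideanSpace.norm_eq]
      simp [hw]
    have := real_inner_le_norm w u
    rw [hinner, hnu, hnw] at this
    exact this
  have hA'le : ‖A'‖ ≤ Real.sqrt n := by
    apply ContinuousLinearMap.opNorm_le_bound _ (Real.sqrt_nonneg _)
    intro v
    rw [hA'apply]
    calc ‖∑ j : Fin n, v j • x j‖ ≤ ∑ j : Fin n, ‖v j • x j‖ := norm_sum_le _ _
      _ ≤ ∑ j : Fin n, |v j| := by
          refine Finset.sum_le_sum fun j _ => ?_
          rw [norm_smul, Real.norm_eq_abs]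
          exact mul_le_of_le_one_right (abs_nonneg _) (hx1 j)
      _ ≤ Real.sqrt n * ‖v‖ := hCS v
  -- the operator Y → Eⁿ
  obtain ⟨BfinLin, hBfinLindef⟩ : ∃ Z : Y →ₗ[ℝ] EuclideanSpace ℝ (Fin n),
      Z = { toFun := fun y => (WithLp.toLp 2 (fun i => b i y) : EuclideanSpace ℝ (Fin n)),
            map_add' := by intro y z; ext i; simp,
            map_smul' := by intro a y; ext i; simp } := ⟨_, rfl⟩
  have hBfinLinapply : ∀ (y : Y) (i : Fin n), BfinLin y i = b i y := by
    rw [hBfinLindef]; exact fun y i => rfl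
  have hBbound : ∀ y : Y, ‖BfinLin y‖ ≤ Real.sqrt n * ‖y‖ := by
    intro y
    rw [EuclideanSpace.norm_eq]
    have h1 : ∑ i : Fin n, ‖BfinLin y i‖ ^ 2 ≤ ∑ _i : Fin n, ‖y‖ ^ 2 := by
      refine Finset.sum_le_sum fun i _ => ?_
      have h2 : ‖BfinLin y i‖ ≤ ‖y‖ := by
        rw [hBfinLinapply]
        calc ‖b i y‖ ≤ ‖b i‖ * ‖y‖ := ContinuousLinearMap.le_opNorm _ _
          _ ≤ 1 * ‖y‖ := mul_le_mul_of_nonneg_right (hb1 i) (norm_nonneg y)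
          _ = ‖y‖ := one_mul _
      exact pow_le_pow_left₀ (norm_nonneg _) h2 2
    have h3 : ∑ _i : Fin n, ‖y‖ ^ 2 = (n : ℝ) * ‖y‖ ^ 2 := by
      rw [Finset.sum_const, Finset.card_univ, Fintype.card_fin, nsmul_eq_mul]
    calc Real.sqrt (∑ i : Fin n, ‖BfinLin y i‖ ^ 2)
        ≤ Real.sqrt ((n : ℝ) * ‖y‖ ^ 2) := Real.sqrt_le_sqrt (by rw [← h3]; exact h1)
      _ = Real.sqrt n * ‖y‖ := by
          rw [Real.sqrt_mul (Nat.cast_nonneg n), Real.sqrt_sq (norm_nonneg y)]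
  obtain ⟨Bfin, hBfindef⟩ : ∃ Z : Y →L[ℝ] EuclideanSpace ℝ (Fin n),
      Z = BfinLin.mkContinuous (Real.sqrt n) hBbound := ⟨_, rfl⟩
  have hBfinle : ‖Bfin‖ ≤ Real.sqrt n := by
    rw [hBfindef]
    exact LinearMap.mkContinuous_norm_le _ (Real.sqrt_nonneg _) _
  have hBfinapply : ∀ (y : Y) (i : Fin n), Bfin y i = b i y := by
    intro y i
    rw [hBfindef, LinearMap.mkContinuous_apply, hBfinLinapply]
  -- embedding and projection
  obtain ⟨J, hJdef⟩ : ∃ Z : EuclideanSpace ℝ (Fin n) →L[ℝ] Ell2,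
      Z = (PietschAux.extLi n).toContinuousLinearMap := ⟨_, rfl⟩
  have hJle : ‖J‖ ≤ 1 := by
    rw [hJdef]; exact LinearIsometry.norm_toContinuousLinearMap_le _
  obtain ⟨Pr, hPrdef⟩ : ∃ Z : Ell2 →L[ℝ] EuclideanSpace ℝ (Fin n),
      Z = PietschAux.projCLM n := ⟨_, rfl⟩
  have hPrle : ‖Pr‖ ≤ 1 := by rw [hPrdef]; exact PietschAux.norm_projCLM_le
  have hPrJ : ∀ v : EuclideanSpace ℝ (Fin n), Pr (J v) = v := by
    intro v
    rw [hPrdef, hJdef]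
    rw [LinearIsometry.coe_toContinuousLinearMap]
    exact PietschAux.proj_ext v
  obtain ⟨A, hAdef⟩ : ∃ Z : Ell2 →L[ℝ] X, Z = A'.comp Pr := ⟨_, rfl⟩
  obtain ⟨B, hBdef⟩ : ∃ Z : Y →L[ℝ] Ell2, Z = J.comp Bfin := ⟨_, rfl⟩
  have hAle : ‖A‖ ≤ Real.sqrt n := by
    rw [hAdef]
    calc ‖A'.comp Pr‖ ≤ ‖A'‖ * ‖Pr‖ := ContinuousLinearMap.opNorm_comp_le _ _
      _ ≤ Real.sqrt n * 1 := mul_le_mul hA'le hPrle (norm_nonneg _) (Real.sqrt_nonneg _)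
      _ = Real.sqrt n := mul_one _
  have hBle : ‖B‖ ≤ Real.sqrt n := by
    rw [hBdef]
    calc ‖J.comp Bfin‖ ≤ ‖J‖ * ‖Bfin‖ := ContinuousLinearMap.opNorm_comp_le _ _
      _ ≤ 1 * Real.sqrt n := mul_le_mul hJle hBfinle (norm_nonneg _) (by norm_num)
      _ = Real.sqrt n := one_mul _
  -- nontriviality
  have hSxpos : ∀ j, 0 < ‖S (x j)‖ := fun j => lt_of_lt_of_le hpos (hlow j)
  have hxne : ∀ j, x j ≠ 0 := by
    intro j h
    have := hSxpos j
    rw [h, map_zero, norm_zero] at this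
    exact lt_irrefl 0 this
  have hA'single : ∀ j : Fin n, A' (EuclideanSpace.single j (1:ℝ)) = x j := by
    intro j
    rw [hA'apply]
    have hz : ∀ i ∈ Finset.univ, i ≠ j → (EuclideanSpace.single j (1:ℝ)) i • x i = 0 := by
      intro i _ hij
      rw [EuclideanSpace.single_apply, if_neg hij, zero_smul]
    rw [Finset.sum_eq_single j hz (fun h => absurd (Finset.mem_univ j) h),
      EuclideanSpace.single_apply, if_pos rfl, one_smul]
  have hAne : A ≠ 0 := by
    intro h
    have j0 : Fin n := ⟨0, by omega⟩
    have h1 : A (J (EuclideanSpace.single j0 (1:ℝ))) = x j0 := by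
      rw [hAdef, ContinuousLinearMap.comp_apply, hPrJ, hA'single]
    rw [h, ContinuousLinearMap.zero_apply] at h1
    exact hxne j0 h1.symm
  have hJnorm : ∀ z : EuclideanSpace ℝ (Fin n), ‖J z‖ = ‖z‖ := by
    intro z
    rw [hJdef, LinearIsometry.coe_toContinuousLinearMap]
    exact (PietschAux.extLi n).norm_map z
  have hBne : B ≠ 0 := by
    intro h
    have j0 : Fin n := ⟨0, by omega⟩
    have h1 : B (S (x j0)) = 0 := by rw [h, ContinuousLinearMap.zero_apply]
    have h2 : ‖Bfin (S (x j0))‖ = 0 := by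
      rw [← hJnorm (Bfin (S (x j0)))]
      rw [show J (Bfin (S (x j0))) = B (S (x j0)) from by
        rw [hBdef, ContinuousLinearMap.comp_apply], h1, norm_zero]
    have h3 : Bfin (S (x j0)) = 0 := norm_eq_zero.mp h2
    have h4 : b j0 (S (x j0)) = 0 := by
      rw [← hBfinapply (S (x j0)) j0, h3]
      rfl
    rw [hbx j0] at h4
    exact ne_of_gt (hSxpos j0) h4
  -- the compressed operator and the full operator
  obtain ⟨T', hT'def⟩ : ∃ Z : EuclideanSpace ℝ (Fin n) →L[ℝ] EuclideanSpace ℝ (Fin n),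
      Z = Bfin.comp (S.comp A') := ⟨_, rfl⟩
  obtain ⟨T, hTdef⟩ : ∃ Z : Ell2 →L[ℝ] Ell2, Z = B.comp (S.comp A) := ⟨_, rfl⟩
  have hT'PTJ : T' = Pr.comp (T.comp J) := by
    refine ContinuousLinearMap.ext fun v => ?_
    rw [hT'def, hTdef, hAdef, hBdef]
    simp only [ContinuousLinearMap.comp_apply]
    rw [hPrJ v, hPrJ]
  -- approximation number estimates
  have happT' : ∀ k : Fin n, approxNumber ((k:ℕ) + 1) T' ≤ (n:ℝ) * hilbertNumber ((k:ℕ)+1) S := by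
    intro k
    have hk1 : 1 ≤ (k:ℕ) + 1 := by omega
    have h1 : approxNumber ((k:ℕ)+1) T' ≤ ‖Pr‖ * approxNumber ((k:ℕ)+1) T * ‖J‖ := by
      rw [hT'PTJ]
      exact approxNumber_comp_le hk1 Pr T J
    have h2 : ‖Pr‖ * approxNumber ((k:ℕ)+1) T * ‖J‖ ≤ approxNumber ((k:ℕ)+1) T := by
      have ha := approxNumber_nonneg ((k:ℕ)+1) T
      calc ‖Pr‖ * approxNumber ((k:ℕ)+1) T * ‖J‖
          ≤ approxNumber ((k:ℕ)+1) T * ‖J‖ :=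
            mul_le_mul_of_nonneg_right (mul_le_of_le_one_left ha hPrle) (norm_nonneg J)
        _ ≤ approxNumber ((k:ℕ)+1) T := mul_le_of_le_one_right ha hJle
    have h3 : approxNumber ((k:ℕ)+1) T ≤ hilbertNumber ((k:ℕ)+1) S * (‖B‖ * ‖A‖) := by
      rw [hTdef]
      exact approx_le_hilbert_mul hk1 S A B hAne hBne
    have h4 : ‖B‖ * ‖A‖ ≤ (n:ℝ) := by
      calc ‖B‖ * ‖A‖ ≤ Real.sqrt n * Real.sqrt n :=
            mul_le_mul hBle hAle (norm_nonneg _) (Real.sqrt_nonneg _)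
        _ = (n:ℝ) := Real.mul_self_sqrt (Nat.cast_nonneg n)
    have h5 : hilbertNumber ((k:ℕ)+1) S * (‖B‖ * ‖A‖) ≤ (n:ℝ) * hilbertNumber ((k:ℕ)+1) S := by
      calc hilbertNumber ((k:ℕ)+1) S * (‖B‖ * ‖A‖)
          ≤ hilbertNumber ((k:ℕ)+1) S * (n:ℝ) :=
            mul_le_mul_of_nonneg_left h4 (hhnn _)
        _ = (n:ℝ) * hilbertNumber ((k:ℕ)+1) S := mul_comm _ _
    linarith
  -- determinant computation
  set bas := (EuclideanSpace.basisFun (Fin n) ℝ).toBasis with hbasdef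
  have hmat : LinearMap.toMatrix bas bas
      (T' : EuclideanSpace ℝ (Fin n) →ₗ[ℝ] EuclideanSpace ℝ (Fin n))
      = Matrix.of (fun i j => b i (S (x j))) := by
    ext i j
    rw [LinearMap.toMatrix_apply]
    have hbj : bas j = EuclideanSpace.single j (1:ℝ) := by
      rw [hbasdef, OrthonormalBasis.coe_toBasis, EuclideanSpace.basisFun_apply]
    rw [hbj]
    have hT'v : (T' : EuclideanSpace ℝ (Fin n) →ₗ[ℝ] EuclideanSpace ℝ (Fin n))
        (EuclideanSpace.single j (1:ℝ)) = Bfin (S (x j)) := by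
      rw [ContinuousLinearMap.coe_coe, hT'def]
      simp only [ContinuousLinearMap.comp_apply]
      rw [hA'single]
    rw [hT'v, hbasdef, OrthonormalBasis.coe_toBasis_repr_apply, EuclideanSpace.basisFun_repr,
      hBfinapply]
    rfl
  have htriG : (Matrix.of (fun i j => b i (S (x j)))).BlockTriangular OrderDual.toDual := by
    intro i j hij
    exact htri i j hij
  have hdet : LinearMap.det
      (T' : EuclideanSpace ℝ (Fin n) →ₗ[ℝ] EuclideanSpace ℝ (Fin n))
      = ∏ j : Fin n, b j (S (x j)) := by
    rw [← LinearMap.det_toMatrix bas, hmat, Matrix.det_of_lowerTriangular _ htriG]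
    rfl
  -- the chain of inequalities
  have hchain : (c - ε) ^ n ≤ (n:ℝ) ^ n * P := by
    have e1 : (c - ε) ^ n = ∏ _j : Fin n, (c - ε) := by
      rw [Finset.prod_const, Finset.card_univ, Fintype.card_fin]
    have e2 : ∏ _j : Fin n, (c - ε) ≤ ∏ j : Fin n, ‖S (x j)‖ :=
      Finset.prod_le_prod (fun _ _ => le_of_lt hpos) (fun j _ => hlow j)
    have e3 : ∏ j : Fin n, ‖S (x j)‖ = ∏ j : Fin n, b j (S (x j)) :=
      Finset.prod_congr rfl fun j _ => (hbx j).symm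
    have e4 : ∏ j : Fin n, b j (S (x j)) ≤
        ∏ k : Fin n, approxNumber ((k:ℕ) + 1) T' := by
      have h0 : (0:ℝ) ≤ ∏ j : Fin n, b j (S (x j)) := by
        rw [← e3]
        exact Finset.prod_nonneg fun j _ => norm_nonneg _
      calc ∏ j : Fin n, b j (S (x j)) = |∏ j : Fin n, b j (S (x j))| := (abs_of_nonneg h0).symm
        _ = |LinearMap.det (T' : EuclideanSpace ℝ (Fin n) →ₗ[ℝ] EuclideanSpace ℝ (Fin n))| := by
            rw [hdet]
        _ ≤ ∏ k : Fin n, approxNumber ((k:ℕ) + 1) T' := abs_det_le_prod_approxNumber n T'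
    have e5 : ∏ k : Fin n, approxNumber ((k:ℕ) + 1) T' ≤
        ∏ k : Fin n, ((n:ℝ) * hilbertNumber ((k:ℕ)+1) S) :=
      Finset.prod_le_prod (fun k _ => approxNumber_nonneg _ _) (fun k _ => happT' k)
    have e6 : ∏ k : Fin n, ((n:ℝ) * hilbertNumber ((k:ℕ)+1) S) = (n:ℝ)^n * P := by
      rw [Finset.prod_mul_distrib, Finset.prod_const, Finset.card_univ, Fintype.card_fin]
      congr 1
      rw [hPdef, ← Finset.Ico_add_one_right_eq_Icc, Finset.prod_Ico_eq_prod_range,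
        Fin.prod_univ_eq_prod_range (fun k => hilbertNumber (k+1) S) n]
      exact Finset.prod_congr (by norm_num) fun i _ => by rw [Nat.add_comm]
    calc (c - ε) ^ n = ∏ _j : Fin n, (c - ε) := e1
      _ ≤ ∏ j : Fin n, ‖S (x j)‖ := e2
      _ = ∏ j : Fin n, b j (S (x j)) := e3
      _ ≤ ∏ k : Fin n, approxNumber ((k:ℕ) + 1) T' := e4
      _ ≤ ∏ k : Fin n, ((n:ℝ) * hilbertNumber ((k:ℕ)+1) S) := e5
      _ = (n:ℝ)^n * P := e6
  have hne : (n:ℝ) ≠ 0 := Nat.cast_ne_zero.mpr (by omega)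
  have hRpow : R ^ n = (n:ℝ) ^ n * P := by
    rw [hRdef, mul_pow]
    congr 1
    rw [← Real.rpow_natCast (P ^ ((1:ℝ)/n)) n, ← Real.rpow_mul hPnn, one_div,
      inv_mul_cancel₀ hne, Real.rpow_one]
  have hpow : (c - ε) ^ n ≤ R ^ n := by rw [hRpow]; exact hchain
  have hfinal : c - ε ≤ R := le_of_pow_le_pow_left₀ (by omega) hRnn hpow
  linarith
end

section
/- Let s be an s-number sequence, i.e., an assignment to every bounded linear operator S between real Banach spaces of a sequence (s_n(S))_{n≥1} of nonnegative reals satisfying axioms (S1)–(S5), and assume additionally that s_n(S) = a_n(S) for every bounded linear operator S : ℓ₂ → ℓ₂. Then for every bounded linear operator S : X → Y between real Banach spaces and every n ≥ 1, h_n(S) ≤ s_n(S), where h_n are the Hilbert numbers. -/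
/-- An s-number sequence (in the sense of Pietsch): an assignment, to every bounded linear
operator between real Banach spaces, of a sequence of nonnegative reals (indexed by `n ≥ 1`)
satisfying (S1)-(S5). -/
structure SNumberSequence where
  /-- `s S n` is the n-th s-number of the operator `S` (relevant for `n ≥ 1`). -/
  s : ∀ {X Y : Type} [NormedAddCommGroup X] [NormedSpace ℝ X] [CompleteSpace X]
      [NormedAddCommGroup Y] [NormedSpace ℝ Y] [CompleteSpace Y],
      (X →L[ℝ] Y) → ℕ → ℝ
  /-- (S1): nonnegativity. -/
  nonneg : ∀ {X Y : Type} [NormedAddCommGroup X] [NormedSpace ℝ X] [CompleteSpace X]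
      [NormedAddCommGroup Y] [NormedSpace ℝ Y] [CompleteSpace Y]
      (S : X →L[ℝ] Y) (n : ℕ), 1 ≤ n → 0 ≤ s S n
  /-- (S1): the first s-number is the operator norm. -/
  first_eq_norm : ∀ {X Y : Type} [NormedAddCommGroup X] [NormedSpace ℝ X] [CompleteSpace X]
      [NormedAddCommGroup Y] [NormedSpace ℝ Y] [CompleteSpace Y]
      (S : X →L[ℝ] Y), s S 1 = ‖S‖
  /-- (S1): monotonicity. -/
  antitone : ∀ {X Y : Type} [NormedAddCommGroup X] [NormedSpace ℝ X] [CompleteSpace X]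
      [NormedAddCommGroup Y] [NormedSpace ℝ Y] [CompleteSpace Y]
      (S : X →L[ℝ] Y) (n : ℕ), 1 ≤ n → s S (n + 1) ≤ s S n
  /-- (S2): additivity. -/
  add_le : ∀ {X Y : Type} [NormedAddCommGroup X] [NormedSpace ℝ X] [CompleteSpace X]
      [NormedAddCommGroup Y] [NormedSpace ℝ Y] [CompleteSpace Y]
      (S T : X →L[ℝ] Y) (n : ℕ), 1 ≤ n → s (S + T) n ≤ s S n + ‖T‖
  /-- (S3): the ideal property. -/
  comp_le : ∀ {W X Y Z : Type}
      [NormedAddCommGroup W] [NormedSpace ℝ W] [CompleteSpace W]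
      [NormedAddCommGroup X] [NormedSpace ℝ X] [CompleteSpace X]
      [NormedAddCommGroup Y] [NormedSpace ℝ Y] [CompleteSpace Y]
      [NormedAddCommGroup Z] [NormedSpace ℝ Z] [CompleteSpace Z]
      (A : W →L[ℝ] X) (S : X →L[ℝ] Y) (B : Y →L[ℝ] Z) (n : ℕ), 1 ≤ n →
      s (B.comp (S.comp A)) n ≤ ‖B‖ * s S n * ‖A‖
  /-- (S4): normalization on the identity of n-dimensional Euclidean space. -/
  id_euclidean : ∀ n : ℕ, 1 ≤ n →
      s (ContinuousLinearMap.id ℝ (EuclideanSpace ℝ (Fin n))) n = 1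
  /-- (S5): vanishing on operators of small rank. -/
  rank_lt : ∀ {X Y : Type} [NormedAddCommGroup X] [NormedSpace ℝ X] [CompleteSpace X]
      [NormedAddCommGroup Y] [NormedSpace ℝ Y] [CompleteSpace Y]
      (S : X →L[ℝ] Y) (n : ℕ), 1 ≤ n → LinearMap.rank (S : X →ₗ[ℝ] Y) < n → s S n = 0

theorem hilbertNumber_le_sNumber (σ : SNumberSequence)
    (hσ : ∀ (S : Ell2 →L[ℝ] Ell2) (n : ℕ), 1 ≤ n → σ.s S n = approxNumber n S)
    {X Y : Type} [NormedAddCommGroup X] [NormedSpace ℝ X] [CompleteSpace X]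
    [NormedAddCommGroup Y] [NormedSpace ℝ Y] [CompleteSpace Y]
    (S : X →L[ℝ] Y) (n : ℕ) (hn : 1 ≤ n) :
    hilbertNumber n S ≤ σ.s S n := by
  apply Real.sSup_le
  · rintro r ⟨A, B, hA, hB, rfl⟩
    have hAn : 0 < ‖A‖ := norm_pos_iff.mpr hA
    have hBn : 0 < ‖B‖ := norm_pos_iff.mpr hB
    rw [div_le_iff₀ (by positivity)]
    calc approxNumber n (B.comp (S.comp A)) = σ.s (B.comp (S.comp A)) n :=
          (hσ _ n hn).symm
      _ ≤ ‖B‖ * σ.s S n * ‖A‖ := σ.comp_le A S B n hn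
      _ = σ.s S n * (‖B‖ * ‖A‖) := by ring
  · exact σ.nonneg S n hn
end

section
/- Let s be an s-number sequence, i.e., an assignment to every bounded linear operator S between real Banach spaces of a sequence (s_n(S))_{n≥1} of nonnegative reals satisfying axioms (S1)–(S5). Then for every compact bounded linear operator S : ℓ₂ → ℓ₂ and every n ≥ 1, s_n(S) = a_n(S), where a_n are the approximation numbers. -/
open scoped InnerProductSpace
open ContinuousLinearMap

lemma ell2_not_findim : ¬ FiniteDimensional ℝ Ell2 := by
  intro h
  have horth : Orthonormal ℝ (fun n : ℕ => lp.single 2 n (1:ℝ)) := by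
    rw [orthonormal_iff_ite]
    intro i j
    classical
    rw [lp.inner_single_left]
    rw [lp.single_apply]
    by_cases hij : i = j
    · simp [hij]
    · simp [hij, Ne.symm hij]
  have hli := horth.linearIndependent
  haveI := hli.finite
  exact not_finite ℕ

lemma exists_unit_eigen {H Y : Type*} [NormedAddCommGroup H] [InnerProductSpace ℝ H]
    [CompleteSpace H] [NormedAddCommGroup Y] [InnerProductSpace ℝ Y] [CompleteSpace Y]
    (B : H →L[ℝ] Y) (hB : IsCompactOperator B) (hn : ‖B‖ ≠ 0) :
    ∃ e : H, ‖e‖ = 1 ∧ (ContinuousLinearMap.adjoint B) (B e) = (‖B‖^2 : ℝ) • e := by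
  have hM : 0 < ‖B‖ := lt_of_le_of_ne (norm_nonneg _) (Ne.symm hn)
  set M : ℝ := ‖B‖ with hMdef
  -- a norming sequence
  have hseq : ∀ k : ℕ, ∃ x : H, ‖x‖ ≤ 1 ∧ M - 1/(k+1) ≤ ‖B x‖ := by
    intro k
    have h1 : M - 1/(k+1) < M := by
      have : (0:ℝ) < 1/(k+1) := by positivity
      linarith
    obtain ⟨x, hx1, hx2⟩ := B.exists_lt_apply_of_lt_opNorm h1
    exact ⟨x, hx1.le, hx2.le⟩
  choose x hx1 hx2 using hseq
  have hBxle : ∀ k, ‖B (x k)‖ ≤ M := fun k =>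
    (B.le_opNorm _).trans (by nlinarith [hx1 k, norm_nonneg (x k)])
  have htend : Filter.Tendsto (fun k => ‖B (x k)‖) Filter.atTop (nhds M) := by
    have h0 : Filter.Tendsto (fun k : ℕ => M - 1/(k+1)) Filter.atTop (nhds (M - 0)) := by
      exact Filter.Tendsto.sub tendsto_const_nhds tendsto_one_div_add_atTop_nhds_zero_nat
    rw [sub_zero] at h0
    exact tendsto_of_tendsto_of_tendsto_of_le_of_le h0 tendsto_const_nhds hx2 hBxle
  set T : H →L[ℝ] H := (ContinuousLinearMap.adjoint B) ∘L B with hT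
  have hTnorm : ‖T‖ = M^2 := by rw [hT, ContinuousLinearMap.norm_adjoint_comp_self]; ring
  -- key estimate
  have hkey : Filter.Tendsto (fun k => T (x k) - (M^2 : ℝ) • (x k)) Filter.atTop (nhds 0) := by
    have hsq : ∀ k, ‖T (x k) - (M^2 : ℝ) • (x k)‖^2 ≤ 2*M^4 - 2*M^2 * ‖B (x k)‖^2 := by
      intro k
      have expand : ‖T (x k) - (M^2 : ℝ) • (x k)‖^2
          = ‖T (x k)‖^2 - 2 * ⟪T (x k), (M^2 : ℝ) • (x k)⟫_ℝ + ‖(M^2 : ℝ) • (x k)‖^2 := by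
        rw [@norm_sub_sq_real]
      have hinner : ⟪T (x k), (M^2 : ℝ) • (x k)⟫_ℝ = M^2 * ‖B (x k)‖^2 := by
        rw [real_inner_smul_right, hT]
        rw [ContinuousLinearMap.coe_comp', Function.comp_apply,
          ContinuousLinearMap.adjoint_inner_left]
        rw [real_inner_self_eq_norm_sq]
      have h1 : ‖T (x k)‖ ≤ M^2 := by
        calc ‖T (x k)‖ ≤ ‖T‖ * ‖x k‖ := T.le_opNorm _
        _ ≤ M^2 * 1 := by
            apply mul_le_mul (le_of_eq hTnorm) (hx1 k) (norm_nonneg _) (by positivity)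
        _ = M^2 := mul_one _
      have h2 : ‖(M^2 : ℝ) • (x k)‖ ≤ M^2 := by
        rw [norm_smul]
        simp only [Real.norm_eq_abs, abs_of_nonneg (sq_nonneg M)]
        nlinarith [hx1 k, sq_nonneg M]
      rw [expand, hinner]
      nlinarith [norm_nonneg (T (x k)), norm_nonneg ((M^2 : ℝ) • (x k))]
    have hlim : Filter.Tendsto (fun k => 2*M^4 - 2*M^2 * ‖B (x k)‖^2) Filter.atTop (nhds 0) := by
      have : Filter.Tendsto (fun k => ‖B (x k)‖^2) Filter.atTop (nhds (M^2)) := by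
        simpa using htend.pow 2
      have := (tendsto_const_nhds (x := (2*M^4 : ℝ))).sub (this.const_mul (2*M^2))
      simpa [show 2*M^4 - 2*M^2*M^2 = 0 by ring] using this
    rw [tendsto_zero_iff_norm_tendsto_zero]
    have hnn : ∀ k, (0:ℝ) ≤ ‖T (x k) - (M^2 : ℝ) • (x k)‖ := fun k => norm_nonneg _
    have hsq' : Filter.Tendsto (fun k => ‖T (x k) - (M^2 : ℝ) • (x k)‖^2) Filter.atTop (nhds 0) :=
      tendsto_of_tendsto_of_tendsto_of_le_of_le tendsto_const_nhds hlim
        (fun k => by positivity) hsq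
    have := hsq'.sqrt
    simpa [Real.sqrt_sq (hnn _)] using this
  -- compactness: extract convergent subsequence of T (x k)
  have hTc : IsCompactOperator T := by
    have := hB.continuous_comp (ContinuousLinearMap.adjoint B).continuous
    exact this
  obtain ⟨K, hK, hKsub⟩ := hTc.image_closedBall_subset_compact (1:ℝ)
  have hmem : ∀ k, T (x k) ∈ K := fun k =>
    hKsub ⟨x k, by simpa [Metric.mem_closedBall] using hx1 k, rfl⟩
  obtain ⟨y, _, φ, hφ, hylim⟩ := hK.tendsto_subseq hmem
  -- x ∘ φ converges to e := (M^2)⁻¹ • y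
  set e : H := (M^2 : ℝ)⁻¹ • y with he
  have hMsq : (M^2 : ℝ) ≠ 0 := by positivity
  have hxe : Filter.Tendsto (fun m => x (φ m)) Filter.atTop (nhds e) := by
    have h1 : Filter.Tendsto (fun m => T (x (φ m)) - (M^2:ℝ) • x (φ m)) Filter.atTop (nhds 0) :=
      hkey.comp hφ.tendsto_atTop
    have h2 : Filter.Tendsto (fun m => (M^2:ℝ) • x (φ m)) Filter.atTop (nhds y) := by
      have := hylim.sub h1
      simpa using this
    have := h2.const_smul ((M^2:ℝ)⁻¹)
    simpa [he, smul_smul, inv_mul_cancel₀ hMsq] using this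
  have hTe : T e = (M^2 : ℝ) • e := by
    have h1 : Filter.Tendsto (fun m => T (x (φ m))) Filter.atTop (nhds (T e)) :=
      (T.continuous.tendsto e).comp hxe
    have h2 := tendsto_nhds_unique h1 hylim
    rw [h2, he, smul_smul, mul_inv_cancel₀ hMsq, one_smul]
  have hnorme : ‖e‖ = 1 := by
    have hne : Filter.Tendsto (fun m => ‖x (φ m)‖) Filter.atTop (nhds ‖e‖) :=
      (continuous_norm.tendsto e).comp hxe
    have hle1 : ‖e‖ ≤ 1 := le_of_tendsto hne (Filter.Eventually.of_forall fun m => hx1 _)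
    have hge1 : 1 ≤ ‖e‖ := by
      have hBn : Filter.Tendsto (fun m => ‖B (x (φ m))‖) Filter.atTop (nhds M) :=
        htend.comp hφ.tendsto_atTop
      have hMe : Filter.Tendsto (fun m => M * ‖x (φ m)‖) Filter.atTop (nhds (M * ‖e‖)) :=
        hne.const_mul M
      have hle : M ≤ M * ‖e‖ :=
        le_of_tendsto_of_tendsto' hBn hMe (fun m => B.le_opNorm _)
      nlinarith
    linarith
  exact ⟨e, hnorme, by simpa [hT] using hTe⟩

lemma mem_orthogonal_span_range_iff {H : Type*} [NormedAddCommGroup H] [InnerProductSpace ℝ H]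
    {ι : Type*} (e : ι → H) (x : H) :
    x ∈ (Submodule.span ℝ (Set.range e))ᗮ ↔ ∀ j, ⟪e j, x⟫_ℝ = 0 := by
  rw [Submodule.mem_orthogonal]
  constructor
  · intro h j
    exact h (e j) (Submodule.subset_span (Set.mem_range_self j))
  · intro h u hu
    induction hu using Submodule.span_induction with
    | mem u hu => obtain ⟨j, rfl⟩ := hu; exact h j
    | zero => simp
    | add u v _ _ hu hv => rw [inner_add_left, hu, hv, add_zero]
    | smul a u _ hu => rw [inner_smul_left, hu, mul_zero]

set_option maxHeartbeats 2000000 in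
lemma exists_next_eigen (S : Ell2 →L[ℝ] Ell2) (hS : IsCompactOperator S)
    {m : ℕ} (e : Fin m → Ell2) (l : Fin m → ℝ)
    (heig : ∀ i y, ⟪S (e i), S y⟫_ℝ = l i * ⟪e i, y⟫_ℝ) :
    ∃ (e' : Ell2) (l' : ℝ),
      (∀ j, ⟪e j, e'⟫_ℝ = 0) ∧ ‖e'‖ = 1 ∧ 0 ≤ l' ∧
      (∀ y, ⟪S e', S y⟫_ℝ = l' * ⟪e', y⟫_ℝ) ∧
      ‖S e'‖^2 = l' ∧
      (∀ x : Ell2, (∀ j, ⟪e j, x⟫_ℝ = 0) → ‖S x‖^2 ≤ l' * ‖x‖^2) := by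
  classical
  set W := Submodule.span ℝ (Set.range e) with hW
  set K := Wᗮ with hK
  haveI : CompleteSpace K := (Submodule.isClosed_orthogonal W).completeSpace_coe
  haveI : FiniteDimensional ℝ W := FiniteDimensional.span_of_finite ℝ (Set.finite_range e)
  set B : K →L[ℝ] Ell2 := S.comp K.subtypeL with hB
  have hBc : IsCompactOperator B := by
    have := hS.comp_clm K.subtypeL
    simpa [hB, ContinuousLinearMap.coe_comp'] using this
  have hmemK : ∀ x : Ell2, x ∈ K ↔ ∀ j, ⟪e j, x⟫_ℝ = 0 := fun x =>
    mem_orthogonal_span_range_iff e x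
  have hBapply : ∀ z : K, B z = S (z : Ell2) := fun z => by
    rw [hB, ContinuousLinearMap.comp_apply, Submodule.subtypeL_apply]
  have hnormK : ∀ z : K, ‖z‖ = ‖(z : Ell2)‖ := fun z => Submodule.coe_norm z
  have main : ∃ (e' : Ell2) (l' : ℝ), e' ∈ K ∧ ‖e'‖ = 1 ∧ 0 ≤ l' ∧
      (∀ z ∈ K, ⟪S e', S z⟫_ℝ = l' * ⟪e', z⟫_ℝ) ∧ ‖S e'‖^2 = l' ∧
      (∀ x ∈ K, ‖S x‖^2 ≤ l' * ‖x‖^2) := by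
    by_cases hBn : ‖B‖ = 0
    · -- S vanishes on K
      have hzero : ∀ x ∈ K, S x = 0 := by
        intro x hx
        have h1 := B.le_opNorm ⟨x, hx⟩
        rw [hBn, zero_mul, hBapply ⟨x, hx⟩] at h1
        simpa [norm_le_zero_iff] using h1
      have hKne : K ≠ ⊥ := by
        intro hbot
        have hWtop : W = ⊤ := (Submodule.orthogonal_eq_bot_iff).mp hbot
        haveI : FiniteDimensional ℝ (⊤ : Submodule ℝ Ell2) := hWtop ▸ ‹FiniteDimensional ℝ W›
        exact ell2_not_findim (Module.Finite.equiv (Submodule.topEquiv))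
      obtain ⟨x0, hx0K, hx0⟩ := (Submodule.ne_bot_iff K).mp hKne
      have hx0n : ‖x0‖ ≠ 0 := norm_ne_zero_iff.mpr hx0
      refine ⟨(‖x0‖)⁻¹ • x0, 0, K.smul_mem _ hx0K, ?_, le_refl 0, ?_, ?_, ?_⟩
      · rw [norm_smul, norm_inv, norm_norm, inv_mul_cancel₀ hx0n]
      · intro z hz
        rw [hzero _ (K.smul_mem _ hx0K), inner_zero_left, zero_mul]
      · rw [hzero _ (K.smul_mem _ hx0K), norm_zero]; ring
      · intro x hx
        rw [hzero _ hx, norm_zero]; nlinarith [sq_nonneg ‖x‖]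
    · obtain ⟨u, hu1, hueig⟩ := exists_unit_eigen B hBc hBn
      have heigK : ∀ z ∈ K, ⟪S (u : Ell2), S z⟫_ℝ = ‖B‖^2 * ⟪(u : Ell2), z⟫_ℝ := by
        intro z hz
        set zz : K := ⟨z, hz⟩ with hzz
        have h1 : ⟪(ContinuousLinearMap.adjoint B) (B u), zz⟫_ℝ
            = ⟪B u, B zz⟫_ℝ := ContinuousLinearMap.adjoint_inner_left B zz (B u)
        rw [hueig, real_inner_smul_left] at h1
        have h2 : ⟪u, zz⟫_ℝ = ⟪(u : Ell2), z⟫_ℝ := Submodule.coe_inner K u zz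
        rw [h2, hBapply u, hBapply zz] at h1
        exact h1.symm
      have hu1' : ‖(u : Ell2)‖ = 1 := by rw [← hnormK u]; exact hu1
      refine ⟨(u : Ell2), ‖B‖^2, u.2, hu1', sq_nonneg _, heigK, ?_, ?_⟩
      · have h3 := heigK (u : Ell2) u.2
        rw [real_inner_self_eq_norm_sq] at h3
        rw [h3, real_inner_self_eq_norm_sq, hu1']
        ring
      · intro x hx
        set xx : K := ⟨x, hx⟩ with hxx
        have h1 := B.le_opNorm xx
        rw [hBapply xx, hnormK xx] at h1
        have h2 : ‖S x‖ ≤ ‖B‖ * ‖x‖ := h1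
        nlinarith [norm_nonneg (S x), norm_nonneg x, norm_nonneg B]
  obtain ⟨e', l', he'K, hn1, hl0, heigK, hnorm, hbd⟩ := main
  have he'perp : ∀ j, ⟪e j, e'⟫_ℝ = 0 := (hmemK e').mp he'K
  have horthW : ∀ w ∈ W, ⟪S e', S w⟫_ℝ = 0 ∧ ⟪e', w⟫_ℝ = 0 := by
    intro w hw
    have h2 : ⟪e', w⟫_ℝ = 0 := by
      rw [real_inner_comm]
      exact (Submodule.mem_orthogonal W e').mp he'K w hw
    refine ⟨?_, h2⟩
    induction hw using Submodule.span_induction with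
    | mem w hw =>
      obtain ⟨j, rfl⟩ := hw
      rw [real_inner_comm, heig j e', he'perp j, mul_zero]
    | zero => simp
    | add u v _ _ hu hv =>
      rw [map_add, inner_add_right, hu, hv, add_zero]
      · rw [real_inner_comm]
        exact (Submodule.mem_orthogonal W e').mp he'K _ (by assumption)
      · rw [real_inner_comm]
        exact (Submodule.mem_orthogonal W e').mp he'K _ (by assumption)
    | smul a u _ hu =>
      rw [map_smul, inner_smul_right, hu, mul_zero]
      rw [real_inner_comm]
      exact (Submodule.mem_orthogonal W e').mp he'K _ (by assumption)
  have heigAll : ∀ y, ⟪S e', S y⟫_ℝ = l' * ⟪e', y⟫_ℝ := by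
    intro y
    set w : Ell2 := (W.orthogonalProjectionOnto y : Ell2) with hw
    set k : Ell2 := y - w with hk2
    have hkK : k ∈ K := Submodule.sub_starProjection_mem_orthogonal (K := W) y
    have hwW : w ∈ W := (W.orthogonalProjectionOnto y).2
    have hy : y = w + k := by rw [hk2]; abel
    obtain ⟨hSw, hew⟩ := horthW w hwW
    calc ⟪S e', S y⟫_ℝ = ⟪S e', S w⟫_ℝ + ⟪S e', S k⟫_ℝ := by
          rw [hy, map_add, inner_add_right]
      _ = l' * ⟪e', k⟫_ℝ := by rw [hSw, heigK k hkK, zero_add]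
      _ = l' * (⟪e', w⟫_ℝ + ⟪e', k⟫_ℝ) := by rw [hew, zero_add]
      _ = l' * ⟪e', y⟫_ℝ := by rw [← inner_add_right, ← hy]
  exact ⟨e', l', he'perp, hn1, hl0, heigAll, hnorm,
    fun x hx => hbd x ((hmemK x).mpr hx)⟩

lemma exists_eigen_family (S : Ell2 →L[ℝ] Ell2) (hS : IsCompactOperator S) (m : ℕ) :
    ∃ (e : Fin m → Ell2) (l : Fin m → ℝ),
      Orthonormal ℝ e ∧
      (∀ i, 0 ≤ l i) ∧
      (∀ i y, ⟪S (e i), S y⟫_ℝ = l i * ⟪e i, y⟫_ℝ) ∧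
      (∀ i, ‖S (e i)‖^2 = l i) ∧
      (∀ (i : Fin m) (x : Ell2), (∀ j : Fin m, (j:ℕ) < (i:ℕ) → ⟪e j, x⟫_ℝ = 0) →
        ‖S x‖^2 ≤ l i * ‖x‖^2) := by
  induction m with
  | zero =>
    refine ⟨Fin.elim0, Fin.elim0, ?_, fun i => i.elim0, fun i => i.elim0, fun i => i.elim0,
      fun i => i.elim0⟩
    rw [orthonormal_iff_ite]
    exact fun i => i.elim0
  | succ m ih =>
    obtain ⟨e, l, horth, hl0, heig, hnorm, hbd⟩ := ih
    obtain ⟨e', l', hperp, hn1, hl0', heig', hnorm', hbd'⟩ := exists_next_eigen S hS e l heig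
    refine ⟨Fin.snoc e e', Fin.snoc l l', ?_, ?_, ?_, ?_, ?_⟩
    · rw [orthonormal_iff_ite]
      intro i j
      refine Fin.lastCases ?_ (fun i' => ?_) i
      · refine Fin.lastCases ?_ (fun j' => ?_) j
        · simp [Fin.snoc_last, real_inner_self_eq_norm_sq, hn1]
        · simp only [Fin.snoc_last, Fin.snoc_castSucc]
          rw [real_inner_comm, hperp j']
          simp [(Fin.castSucc_lt_last j').ne']
      · refine Fin.lastCases ?_ (fun j' => ?_) j
        · simp only [Fin.snoc_last, Fin.snoc_castSucc]
          rw [hperp i']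
          simp [(Fin.castSucc_lt_last i').ne]
        · simp only [Fin.snoc_castSucc]
          rw [(orthonormal_iff_ite.mp horth) i' j']
          simp [Fin.castSucc_inj]
    · intro i
      refine Fin.lastCases ?_ (fun i' => ?_) i
      · simpa [Fin.snoc_last] using hl0'
      · simpa [Fin.snoc_castSucc] using hl0 i'
    · intro i y
      refine Fin.lastCases ?_ (fun i' => ?_) i
      · simpa [Fin.snoc_last] using heig' y
      · simpa [Fin.snoc_castSucc] using heig i' y
    · intro i
      refine Fin.lastCases ?_ (fun i' => ?_) i
      · simpa [Fin.snoc_last] using hnorm'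
      · simpa [Fin.snoc_castSucc] using hnorm i'
    · intro i x
      refine Fin.lastCases (motive := fun i => (∀ j : Fin (m+1), (j:ℕ) < (i:ℕ) →
          ⟪Fin.snoc (α := fun _ => Ell2) e e' j, x⟫_ℝ = 0) → ‖S x‖^2 ≤ Fin.snoc (α := fun _ => ℝ) l l' i * ‖x‖^2)
        ?_ (fun i' => ?_) i
      · intro hx
        have hx' : ∀ j' : Fin m, ⟪e j', x⟫_ℝ = 0 := by
          intro j'
          have := hx (Fin.castSucc j') (by simpa using j'.isLt)
          simpa [Fin.snoc_castSucc] using this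
        simpa [Fin.snoc_last] using hbd' x hx'
      · intro hx
        have hx' : ∀ j' : Fin m, (j' : ℕ) < (i' : ℕ) → ⟪e j', x⟫_ℝ = 0 := by
          intro j' hj'
          have := hx (Fin.castSucc j') (by simpa using hj')
          simpa [Fin.snoc_castSucc] using this
        simpa [Fin.snoc_castSucc] using hbd i' x hx'

set_option maxHeartbeats 2000000 in
theorem sNumber_eq_approxNumber_of_compact (σ : SNumberSequence)
    (S : Ell2 →L[ℝ] Ell2) (hS : IsCompactOperator S) (n : ℕ) (hn : 1 ≤ n) :
    σ.s S n = approxNumber n S := by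
  classical
  obtain ⟨m, rfl⟩ : ∃ m, n = m + 1 := ⟨n - 1, (Nat.succ_pred_eq_of_pos hn).symm⟩
  have hbdd : BddBelow {r : ℝ | ∃ L : Ell2 →L[ℝ] Ell2,
      LinearMap.rank (L : Ell2 →ₗ[ℝ] Ell2) < (m+1 : ℕ) ∧ r = ‖S - L‖} := by
    refine ⟨0, ?_⟩
    rintro r ⟨L, hL, rfl⟩
    exact norm_nonneg _
  have hrank0 : LinearMap.rank ((0 : Ell2 →L[ℝ] Ell2) : Ell2 →ₗ[ℝ] Ell2) < ((m+1 : ℕ) : Cardinal) := by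
    have h1 : ((0 : Ell2 →L[ℝ] Ell2) : Ell2 →ₗ[ℝ] Ell2) = 0 := rfl
    rw [h1, LinearMap.rank_zero]
    exact_mod_cast Nat.succ_pos m
  -- Part 1: s_n(S) ≤ a_n(S)
  have part1 : σ.s S (m+1) ≤ approxNumber (m+1) S := by
    refine le_csInf ⟨‖S - 0‖, ⟨0, hrank0, rfl⟩⟩ ?_
    rintro r ⟨L, hL, rfl⟩
    have h1 := σ.add_le L (S - L) (m+1) hn
    rw [add_sub_cancel] at h1
    rw [σ.rank_lt L (m+1) hn hL, zero_add] at h1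
    exact h1
  -- the eigen-family
  obtain ⟨e, l, horth, hl0, heig, hnorm, hbd⟩ := exists_eigen_family S hS (m+1)
  set lam := l (Fin.last m) with hlam
  have hlam0 : 0 ≤ lam := hl0 _
  have hsqlam : Real.sqrt lam ^ 2 = lam := Real.sq_sqrt hlam0
  -- Part (a): a_n(S) ≤ √lam
  have parta : approxNumber (m+1) S ≤ Real.sqrt lam := by
    set W := Submodule.span ℝ (Set.range (fun j : Fin m => e j.castSucc)) with hW
    haveI : FiniteDimensional ℝ W := FiniteDimensional.span_of_finite ℝ (Set.finite_range _)
    set L : Ell2 →L[ℝ] Ell2 :=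
      S.comp (W.subtypeL.comp (W.orthogonalProjectionOnto)) with hLdef
    have hLapp : ∀ x : Ell2, L x = S ((W.orthogonalProjectionOnto x : Ell2)) := by
      intro x
      rw [hLdef]
      simp [ContinuousLinearMap.comp_apply, Submodule.subtypeL_apply]
    have hrank : LinearMap.rank (L : Ell2 →ₗ[ℝ] Ell2) < ((m+1 : ℕ) : Cardinal) := by
      have hle : LinearMap.range (L : Ell2 →ₗ[ℝ] Ell2) ≤ W.map (S : Ell2 →ₗ[ℝ] Ell2) := by
        rintro y ⟨x, rfl⟩
        have : (L : Ell2 →ₗ[ℝ] Ell2) x = S ((W.orthogonalProjectionOnto x : Ell2)) := hLapp x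
        rw [this]
        exact ⟨(W.orthogonalProjectionOnto x : Ell2), (W.orthogonalProjectionOnto x).2, rfl⟩
      calc LinearMap.rank (L : Ell2 →ₗ[ℝ] Ell2)
          = Module.rank ℝ (LinearMap.range (L : Ell2 →ₗ[ℝ] Ell2)) := rfl
        _ ≤ Module.rank ℝ (W.map (S : Ell2 →ₗ[ℝ] Ell2)) := Submodule.rank_mono hle
        _ ≤ Module.rank ℝ W := rank_map_le _ _
        _ ≤ Cardinal.mk (Set.range (fun j : Fin m => e j.castSucc)) := rank_span_le _
        _ ≤ (m : Cardinal) := le_trans Cardinal.mk_range_le (by simp)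
        _ < ((m+1 : ℕ) : Cardinal) := by exact_mod_cast Nat.lt_succ_self m
    have hnormle : ‖S - L‖ ≤ Real.sqrt lam := by
      apply ContinuousLinearMap.opNorm_le_bound _ (Real.sqrt_nonneg _)
      intro x
      set px : Ell2 := (W.orthogonalProjectionOnto x : Ell2) with hpx
      have hx' : (S - L) x = S (x - px) := by
        rw [ContinuousLinearMap.sub_apply, hLapp x, ← map_sub]
      have hmem : x - px ∈ Wᗮ := Submodule.sub_starProjection_mem_orthogonal (K := W) x
      have hxperp : ∀ j : Fin (m+1), (j:ℕ) < ((Fin.last m : Fin (m+1)):ℕ) →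
          ⟪e j, x - px⟫_ℝ = 0 := by
        intro j hj
        have hjm : (j : ℕ) < m := by simpa using hj
        have hjW : e j ∈ W := by
          apply Submodule.subset_span
          exact ⟨⟨(j:ℕ), hjm⟩, congrArg e (Fin.ext (by simp))⟩
        exact hmem (e j) hjW
      have hbdx := hbd (Fin.last m) (x - px) hxperp
      have hxle : ‖x - px‖ ^ 2 ≤ ‖x‖ ^ 2 := by
        have hpyth := norm_add_sq_real px (x - px)
        have hinner : ⟪px, x - px⟫_ℝ = 0 :=
          hmem px (W.orthogonalProjectionOnto x).2
        rw [hinner] at hpyth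
        have hsum : px + (x - px) = x := by abel
        rw [hsum] at hpyth
        nlinarith [sq_nonneg ‖px‖]
      have h2 : ‖S (x - px)‖ ^ 2 ≤ lam * ‖x‖ ^ 2 := by
        calc ‖S (x - px)‖ ^ 2 ≤ lam * ‖x - px‖ ^ 2 := hbdx
          _ ≤ lam * ‖x‖ ^ 2 := by
            apply mul_le_mul_of_nonneg_left hxle hlam0
      have h3 := Real.sqrt_le_sqrt h2
      rw [Real.sqrt_sq (norm_nonneg _)] at h3
      rw [Real.sqrt_mul hlam0, Real.sqrt_sq (norm_nonneg x)] at h3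
      rw [hx']
      exact h3
    have hmemset : ‖S - L‖ ∈ {r : ℝ | ∃ L' : Ell2 →L[ℝ] Ell2,
        LinearMap.rank (L' : Ell2 →ₗ[ℝ] Ell2) < (m+1 : ℕ) ∧ r = ‖S - L'‖} := ⟨L, hrank, rfl⟩
    exact le_trans (csInf_le hbdd hmemset) hnormle
  -- Part (b): √lam ≤ s_n(S)
  have partb : Real.sqrt lam ≤ σ.s S (m+1) := by
    rcases eq_or_lt_of_le hlam0 with h0 | hpos
    · rw [← h0, Real.sqrt_zero]
      exact σ.nonneg S (m+1) hn
    · have hunit : ∀ i, ‖e i‖ = 1 := fun i => horth.1 i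
      have hlge : ∀ i, lam ≤ l i := by
        intro i
        have hperp : ∀ j : Fin (m+1), (j:ℕ) < (i:ℕ) → ⟪e j, e (Fin.last m)⟫_ℝ = 0 := by
          intro j hj
          have hne : j ≠ Fin.last m := by
            intro h
            rw [h] at hj
            simp at hj
            omega
          exact (orthonormal_iff_ite.mp horth j (Fin.last m)).trans (by simp [hne]) |>.trans rfl
        have := hbd i (e (Fin.last m)) hperp
        rw [hnorm (Fin.last m), hunit (Fin.last m)] at this
        simpa using this
      have hlpos : ∀ i, 0 < l i := fun i => lt_of_lt_of_le hpos (hlge i)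
      -- operator A
      set Alin : EuclideanSpace ℝ (Fin (m+1)) →ₗ[ℝ] Ell2 :=
        { toFun := fun c => ∑ i, c i • e i
          map_add' := by
            intro c d
            simp only [PiLp.add_apply, add_smul]
            rw [Finset.sum_add_distrib]
          map_smul' := by
            intro r c
            simp only [PiLp.smul_apply, smul_eq_mul, RingHom.id_apply, Finset.smul_sum,
              smul_smul] } with hAlin
      set A : EuclideanSpace ℝ (Fin (m+1)) →L[ℝ] Ell2 := Alin.toContinuousLinearMap with hA
      have hAapp : ∀ c, A c = ∑ i, c i • e i := fun c => rfl
      have hAnorm : ∀ c, ‖A c‖ = ‖c‖ := by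
        intro c
        have h1 : ⟪A c, A c⟫_ℝ = ∑ i, c i * c i := by
          rw [hAapp]
          have := horth.inner_sum (fun i => c i) (fun i => c i) Finset.univ
          simpa using this
        have h2 : ‖A c‖ ^ 2 = ∑ i, c i ^ 2 := by
          rw [← real_inner_self_eq_norm_sq, h1]
          exact Finset.sum_congr rfl fun i _ => by ring
        have h3 : ‖c‖ = Real.sqrt (∑ i, c i ^ 2) := by
          rw [EuclideanSpace.norm_eq]
          congr 1
          exact Finset.sum_congr rfl fun i _ => by rw [Real.norm_eq_abs, sq_abs]
        rw [h3, ← h2, Real.sqrt_sq (norm_nonneg _)]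
      have hA1 : ‖A‖ ≤ 1 := by
        apply ContinuousLinearMap.opNorm_le_bound _ zero_le_one
        intro c
        rw [hAnorm, one_mul]
      -- operator B
      set B : Ell2 →L[ℝ] EuclideanSpace ℝ (Fin (m+1)) :=
        ∑ i, (((l i)⁻¹ • (innerSL ℝ (S (e i)))).smulRight (EuclideanSpace.single i (1:ℝ))) with hB
      have hBapp : ∀ (y : Ell2) (i : Fin (m+1)), B y i = (l i)⁻¹ * ⟪S (e i), y⟫_ℝ := by
        intro y i
        rw [hB, ContinuousLinearMap.sum_apply]
        set F := fun j : Fin (m+1) =>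
          ((((l j)⁻¹ • (innerSL ℝ (S (e j)))).smulRight (EuclideanSpace.single j (1:ℝ)))) y with hF
        have hsum : (∑ j, F j) i = ∑ j, F j i := by rw [WithLp.ofLp_sum, Finset.sum_apply]
        rw [hsum]
        have h1 : ∀ j, F j i = ((l j)⁻¹ * ⟪S (e j), y⟫_ℝ) * (if i = j then (1:ℝ) else 0) := by
          intro j
          rw [hF]
          simp only [ContinuousLinearMap.smulRight_apply, ContinuousLinearMap.smul_apply,
            coe_innerSL_apply, innerSL_apply_apply, smul_eq_mul, PiLp.smul_apply,
            EuclideanSpace.single_apply]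
          try ring
        simp only [h1, mul_ite, mul_one, mul_zero]
        rw [Finset.sum_ite_eq Finset.univ i (fun j => (l j)⁻¹ * ⟪S (e j), y⟫_ℝ)]
        simp
      -- B ∘ S ∘ A = id
      have hcomp : B.comp (S.comp A) = ContinuousLinearMap.id ℝ (EuclideanSpace ℝ (Fin (m+1))) := by
        apply ContinuousLinearMap.ext
        intro c
        have hcoord : ∀ i, B (S (A c)) i = c i := by
          intro i
          rw [hBapp, heig i (A c), hAapp]
          rw [inner_sum]
          have h2 : ∀ j ∈ Finset.univ, ⟪e i, c j • e j⟫_ℝ = if i = j then c j else 0 := by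
            intro j _
            rw [real_inner_smul_right, (orthonormal_iff_ite.mp horth) i j]
            by_cases h : i = j <;> simp [h]
          rw [Finset.sum_congr rfl h2, Finset.sum_ite_eq Finset.univ i (fun j => c j)]
          simp only [Finset.mem_univ, if_true]
          rw [inv_mul_cancel_left₀ (hlpos i).ne']
        show B (S (A c)) = c
        exact PiLp.ext hcoord
      -- the auxiliary orthonormal family f and the norm bound on B
      set f := fun i : Fin (m+1) => (Real.sqrt (l i))⁻¹ • S (e i) with hf
      have hsql : ∀ i, Real.sqrt (l i) ^ 2 = l i := fun i => Real.sq_sqrt (hl0 i)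
      have hsqlpos : ∀ i, 0 < Real.sqrt (l i) := fun i => Real.sqrt_pos.mpr (hlpos i)
      have horthf : Orthonormal ℝ f := by
        rw [orthonormal_iff_ite]
        intro i j
        rw [hf]
        simp only []
        rw [real_inner_smul_left, real_inner_smul_right, heig i (e j),
          (orthonormal_iff_ite.mp horth) i j]
        by_cases h : i = j
        · subst h
          simp only [eq_self_iff_true, if_true, mul_one]
          have h4 := hsql i
          have h5 := (hsqlpos i).ne'
          field_simp
          exact h4.symm
        · simp [h]
      have hSe : ∀ i, S (e i) = Real.sqrt (l i) • f i := by
        intro i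
        rw [hf]
        rw [smul_smul, mul_inv_cancel₀ (hsqlpos i).ne', one_smul]
      have hBnorm : ‖B‖ ≤ (Real.sqrt lam)⁻¹ := by
        apply ContinuousLinearMap.opNorm_le_bound _ (by positivity)
        intro y
        have hcoord : ∀ i, (B y i)^2 ≤ lam⁻¹ * ⟪f i, y⟫_ℝ^2 := by
          intro i
          rw [hBapp, hSe i, real_inner_smul_left]
          have h6 : ((l i)⁻¹ * (Real.sqrt (l i) * ⟪f i, y⟫_ℝ))^2
              = (l i)⁻¹ * ⟪f i, y⟫_ℝ^2 := by
            have hli := (hlpos i).ne'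
            calc ((l i)⁻¹ * (Real.sqrt (l i) * ⟪f i, y⟫_ℝ))^2
                = (l i)⁻¹ * ((l i)⁻¹ * Real.sqrt (l i)^2) * ⟪f i, y⟫_ℝ^2 := by ring
              _ = (l i)⁻¹ * ((l i)⁻¹ * l i) * ⟪f i, y⟫_ℝ^2 := by rw [hsql i]
              _ = (l i)⁻¹ * ⟪f i, y⟫_ℝ^2 := by rw [inv_mul_cancel₀ hli, mul_one]
          rw [h6]
          apply mul_le_mul_of_nonneg_right _ (sq_nonneg _)
          exact inv_anti₀ hpos (hlge i)
        have hnormsq : ‖B y‖^2 = ∑ i, (B y i)^2 := by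
          rw [EuclideanSpace.norm_eq, Real.sq_sqrt (by positivity)]
          exact Finset.sum_congr rfl fun i _ => by rw [Real.norm_eq_abs, sq_abs]
        have hbessel : ∑ i, ⟪f i, y⟫_ℝ^2 ≤ ‖y‖^2 := by
          have := horthf.sum_inner_products_le (s := Finset.univ) y
          simpa [Real.norm_eq_abs, sq_abs] using this
        have h7 : ‖B y‖^2 ≤ lam⁻¹ * ‖y‖^2 := by
          rw [hnormsq]
          calc ∑ i, (B y i)^2 ≤ ∑ i, lam⁻¹ * ⟪f i, y⟫_ℝ^2 :=
                Finset.sum_le_sum fun i _ => hcoord i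
            _ = lam⁻¹ * ∑ i, ⟪f i, y⟫_ℝ^2 := by rw [Finset.mul_sum]
            _ ≤ lam⁻¹ * ‖y‖^2 := by
                apply mul_le_mul_of_nonneg_left hbessel (by positivity)
        have h8 := Real.sqrt_le_sqrt h7
        rw [Real.sqrt_sq (norm_nonneg _)] at h8
        rw [Real.sqrt_mul (by positivity), Real.sqrt_sq (norm_nonneg y), Real.sqrt_inv] at h8
        exact h8
      -- conclude
      have hid := σ.id_euclidean (m+1) hn
      have h3 := σ.comp_le A S B (m+1) hn
      rw [hcomp, hid] at h3
      have hs0 : 0 ≤ σ.s S (m+1) := σ.nonneg S (m+1) hn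
      have ht : 0 < Real.sqrt lam := Real.sqrt_pos.mpr hpos
      have h4 : ‖B‖ * σ.s S (m+1) * ‖A‖ ≤ (Real.sqrt lam)⁻¹ * σ.s S (m+1) := by
        calc ‖B‖ * σ.s S (m+1) * ‖A‖ ≤ ‖B‖ * σ.s S (m+1) * 1 :=
              mul_le_mul_of_nonneg_left hA1 (by positivity)
          _ = ‖B‖ * σ.s S (m+1) := mul_one _
          _ ≤ (Real.sqrt lam)⁻¹ * σ.s S (m+1) := mul_le_mul_of_nonneg_right hBnorm hs0
      have h5 : 1 ≤ (Real.sqrt lam)⁻¹ * σ.s S (m+1) := le_trans h3 h4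
      have h9 := mul_le_mul_of_nonneg_left h5 ht.le
      rw [mul_one, ← mul_assoc, mul_inv_cancel₀ ht.ne', one_mul] at h9
      exact h9
  exact le_antisymm part1 (parta.trans partb)
end
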